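/- arXiv:2201.07930 — 4 statements merged into one kernel-verified Lean document; each statement's English description precedes it below -/
import Mathlib

section
/- Uniqueness in the discrete-time stochastic representation problem under a nonlinear expectation: if L¹ = (L¹_t)_{t=0,...,N} and L² = (L²_t)_{t=0,...,N} are both adapted processes such that, for every t ∈ {0,...,N} and i = 1,2, the random variable Σ_{u=t}^{N} f(u, max_{t≤v≤u} L^i_v) is square-integrable and X_t = E_t[Σ_{u=t}^{N} f(u, max_{t≤v≤u} L^i_v)] a.s., then L¹_t = L²_t a.s. for every t ∈ {0,...,N}. -/
open MeasureTheory Filter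

/-- Running maximum `max_{t ≤ v ≤ u} L v ω` (intended for `t ≤ u`). -/
noncomputable def runMax {Ω : Type*} (L : ℕ → Ω → ℝ) (t u : ℕ) (ω : Ω) : ℝ :=
  (Finset.Icc t u).fold max (L t ω) fun v => L v ω

/-- Running minimum `min_{t ≤ v ≤ u} K v ω` (intended for `t ≤ u`). -/
noncomputable def runMin {Ω : Type*} (K : ℕ → Ω → ℝ) (t u : ℕ) (ω : Ω) : ℝ :=
  (Finset.Icc t u).fold min (K t ω) fun v => K v ω

/-- A discrete-time nonlinear expectation on the horizon `{0, ..., N}`: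
a family of maps `E t` sending square-integrable `F N`-measurable random
variables to square-integrable `F t`-measurable random variables, satisfying
monotonicity, strict monotonicity, translation invariance, the tower property,
the zero-one law and monotone convergence. -/
structure NLExp {Ω : Type*} {m0 : MeasurableSpace Ω} (μ : Measure Ω)
    (F : Filtration ℕ m0) (N : ℕ) where
  E : ℕ → (Ω → ℝ) → Ω → ℝ
  adapted : ∀ t, t ≤ N → ∀ ξ : Ω → ℝ, StronglyMeasurable[F N] ξ → MemLp ξ 2 μ →
    StronglyMeasurable[F t] (E t ξ)
  sqInt : ∀ t, t ≤ N → ∀ ξ : Ω → ℝ, StronglyMeasurable[F N] ξ → MemLp ξ 2 μ →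
    MemLp (E t ξ) 2 μ
  mono : ∀ t, t ≤ N → ∀ ξ η : Ω → ℝ, StronglyMeasurable[F N] ξ → MemLp ξ 2 μ →
    StronglyMeasurable[F N] η → MemLp η 2 μ → ξ ≤ᵐ[μ] η → E t ξ ≤ᵐ[μ] E t η
  strictMono : ∀ t, t ≤ N → ∀ ξ η : Ω → ℝ, StronglyMeasurable[F N] ξ → MemLp ξ 2 μ →
    StronglyMeasurable[F N] η → MemLp η 2 μ → ξ ≤ᵐ[μ] η →
    0 < μ {ω | ξ ω < η ω} → 0 < μ {ω | E t ξ ω < E t η ω}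
  translation : ∀ t, t ≤ N → ∀ ξ ζ : Ω → ℝ, StronglyMeasurable[F N] ξ → MemLp ξ 2 μ →
    StronglyMeasurable[F t] ζ → MemLp ζ 2 μ → E t (ξ + ζ) =ᵐ[μ] E t ξ + ζ
  tower : ∀ s t, s ≤ t → t ≤ N → ∀ ξ : Ω → ℝ, StronglyMeasurable[F N] ξ → MemLp ξ 2 μ →
    E s (E t ξ) =ᵐ[μ] E s ξ
  zeroOne : ∀ t, t ≤ N → ∀ ξ η : Ω → ℝ, StronglyMeasurable[F N] ξ → MemLp ξ 2 μ →
    StronglyMeasurable[F N] η → MemLp η 2 μ → ∀ A : Set Ω, MeasurableSet[F t] A →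
    E t (A.indicator ξ + Aᶜ.indicator η) =ᵐ[μ]
      A.indicator (E t ξ) + Aᶜ.indicator (E t η)
  monoConv : ∀ t, t ≤ N → ∀ (ξs : ℕ → Ω → ℝ) (ξ : Ω → ℝ),
    (∀ n, StronglyMeasurable[F N] (ξs n)) → (∀ n, MemLp (ξs n) 2 μ) →
    StronglyMeasurable[F N] ξ → MemLp ξ 2 μ →
    (∀ᵐ ω ∂μ, (Monotone fun n => ξs n ω) ∨ (Antitone fun n => ξs n ω)) →
    (∀ᵐ ω ∂μ, Tendsto (fun n => ξs n ω) atTop (nhds (ξ ω))) →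
    ∀ᵐ ω ∂μ, Tendsto (fun n => E t (ξs n) ω) atTop (nhds (E t ξ ω))


lemma runMax_self {Ω : Type*} (L : ℕ → Ω → ℝ) (t : ℕ) (ω : Ω) :
    runMax L t t ω = L t ω := by
  simp [runMax, Finset.Icc_self]

lemma runMax_le_runMax {Ω : Type*} {K L : ℕ → Ω → ℝ} {t u : ℕ} {ω : Ω}
    (hb : K t ω ≤ L t ω) (h : ∀ v ∈ Finset.Icc t u, K v ω ≤ L v ω) :
    runMax K t u ω ≤ runMax L t u ω := by
  unfold runMax
  rw [Finset.fold_max_le]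
  constructor
  · refine hb.trans ?_
    rw [Finset.le_fold_max]
    exact Or.inl le_rfl
  · intro x hx
    refine (h x hx).trans ?_
    rw [Finset.le_fold_max]
    exact Or.inr ⟨x, hx, le_rfl⟩

lemma sm_fold_max {Ω : Type*} {m : MeasurableSpace Ω} (s : Finset ℕ) (b : Ω → ℝ)
    (g : ℕ → Ω → ℝ) (hb : StronglyMeasurable[m] b) (hg : ∀ v ∈ s, StronglyMeasurable[m] (g v)) :
    StronglyMeasurable[m] fun ω => s.fold max (b ω) fun v => g v ω := by
  classical
  induction s using Finset.induction_on with
  | empty => simpa using hb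
  | @insert a s' hnm ih =>
    simp only [Finset.fold_insert hnm]
    exact (hg a (Finset.mem_insert_self a s')).sup
      (ih fun v hv => hg v (Finset.mem_insert_of_mem hv))

lemma sm_comp_carath {Ω : Type*} {m : MeasurableSpace Ω} (f : Ω → ℝ → ℝ)
    (hc : ∀ ω, Continuous (f ω)) (hm : ∀ l : ℝ, StronglyMeasurable[m] fun ω => f ω l)
    (g : Ω → ℝ) (hg : StronglyMeasurable[m] g) :
    StronglyMeasurable[m] fun ω => f ω (g ω) := by
  have H : StronglyMeasurable[MeasurableSpace.prod _ m]
      (Function.uncurry fun (l : ℝ) (ω : Ω) => f ω l) :=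
    stronglyMeasurable_uncurry_of_continuous_of_stronglyMeasurable
      (fun ω => hc ω) hm
  exact H.comp_measurable (hg.measurable.prodMk measurable_id)

lemma uniq_step {Ω : Type*} {m0 : MeasurableSpace Ω} (μ : Measure Ω) [IsProbabilityMeasure μ]
    (F : Filtration ℕ m0) (N : ℕ) (EE : NLExp μ F N)
    (f : Ω → ℕ → ℝ → ℝ)
    (hf_cont : ∀ ω, ∀ t, t ≤ N → Continuous (f ω t))
    (hf_anti : ∀ ω, ∀ t, t ≤ N → StrictAnti (f ω t))
    (hf_adapted : ∀ t, t ≤ N → ∀ l : ℝ, StronglyMeasurable[F t] fun ω => f ω t l)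
    (L₁ L₂ : ℕ → Ω → ℝ)
    (hL₁_adapted : ∀ t, t ≤ N → StronglyMeasurable[F t] (L₁ t))
    (hL₂_adapted : ∀ t, t ≤ N → StronglyMeasurable[F t] (L₂ t))
    (t : ℕ) (ht : t ≤ N)
    (hmem₁ : MemLp (fun ω => ∑ u ∈ Finset.Icc t N, f ω u (runMax L₁ t u ω)) 2 μ)
    (hmem₂ : MemLp (fun ω => ∑ u ∈ Finset.Icc t N, f ω u (runMax L₂ t u ω)) 2 μ)
    (hrep : EE.E t (fun ω => ∑ u ∈ Finset.Icc t N, f ω u (runMax L₁ t u ω))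
          =ᵐ[μ] EE.E t (fun ω => ∑ u ∈ Finset.Icc t N, f ω u (runMax L₂ t u ω)))
    (hlater : ∀ v, t < v → v ≤ N → L₁ v =ᵐ[μ] L₂ v) :
    ∀ᵐ ω ∂μ, L₁ t ω ≤ L₂ t ω := by
  classical
  set ξ₁ : Ω → ℝ := fun ω => ∑ u ∈ Finset.Icc t N, f ω u (runMax L₁ t u ω) with hξ₁
  set ξ₂ : Ω → ℝ := fun ω => ∑ u ∈ Finset.Icc t N, f ω u (runMax L₂ t u ω) with hξ₂
  -- measurability of the ξ's
  have hSM : ∀ L : ℕ → Ω → ℝ, (∀ v, v ≤ N → StronglyMeasurable[F v] (L v)) →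
      StronglyMeasurable[F N] (fun ω => ∑ u ∈ Finset.Icc t N, f ω u (runMax L t u ω)) := by
    intro L hL
    refine Finset.stronglyMeasurable_fun_sum _ fun u hu => ?_
    obtain ⟨htu, huN⟩ := Finset.mem_Icc.1 hu
    refine sm_comp_carath (m := F N) (fun ω l => f ω u l) (fun ω => hf_cont ω u huN)
      (fun l => (hf_adapted u huN l).mono (F.mono huN)) _ ?_
    refine sm_fold_max (m := F N) _ _ _ ((hL t ht).mono (F.mono ht)) fun v hv => ?_
    obtain ⟨_, hvu⟩ := Finset.mem_Icc.1 hv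
    exact (hL v (hvu.trans huN)).mono (F.mono (hvu.trans huN))
  have hSM₁ : StronglyMeasurable[F N] ξ₁ := hSM L₁ hL₁_adapted
  have hSM₂ : StronglyMeasurable[F N] ξ₂ := hSM L₂ hL₂_adapted
  set A : Set Ω := {ω | L₂ t ω < L₁ t ω} with hA_def
  have hA_Ft : MeasurableSet[F t] A :=
    measurableSet_lt (hL₂_adapted t ht).measurable (hL₁_adapted t ht).measurable
  have hA_FN : MeasurableSet[F N] A := F.mono ht _ hA_Ft
  have hA_m0 : MeasurableSet A := F.le t _ hA_Ft
  by_contra hcon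
  have hApos : 0 < μ A := by
    rw [pos_iff_ne_zero]
    intro h0
    refine hcon ?_
    rw [ae_iff]
    simpa [A, not_le] using h0
  have hgood : ∀ᵐ ω ∂μ, ∀ v ∈ Finset.Icc (t + 1) N, L₁ v ω = L₂ v ω := by
    rw [eventually_all_finset]
    intro v hv
    obtain ⟨h1, h2⟩ := Finset.mem_Icc.1 hv
    exact hlater v h1 h2
  -- the key pointwise strict inequality
  have hkey : ∀ ω, (∀ v ∈ Finset.Icc (t + 1) N, L₁ v ω = L₂ v ω) →
      L₂ t ω < L₁ t ω → ξ₁ ω < ξ₂ ω := by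
    intro ω hg hlt
    refine Finset.sum_lt_sum (fun u hu => ?_) ?_
    · obtain ⟨h1, h2⟩ := Finset.mem_Icc.1 hu
      refine (hf_anti ω u h2).antitone ?_
      refine runMax_le_runMax hlt.le fun v hv => ?_
      obtain ⟨hv1, hv2⟩ := Finset.mem_Icc.1 hv
      rcases eq_or_lt_of_le hv1 with rfl | hv3
      · exact hlt.le
      · exact (hg v (Finset.mem_Icc.2 ⟨hv3, hv2.trans h2⟩)).ge
    · refine ⟨t, Finset.mem_Icc.2 ⟨le_rfl, ht⟩, ?_⟩
      rw [runMax_self, runMax_self]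
      exact hf_anti ω t ht hlt
  set ξ' : Ω → ℝ := A.indicator ξ₁ + Aᶜ.indicator ξ₂ with hξ'
  have hξ'_mem : ∀ ω, ω ∈ A → ξ' ω = ξ₁ ω := by
    intro ω hω
    simp [ξ', Set.indicator_of_mem hω,
      Set.indicator_of_notMem (Set.notMem_compl_iff.2 hω)]
  have hξ'_nmem : ∀ ω, ω ∉ A → ξ' ω = ξ₂ ω := by
    intro ω hω
    simp [ξ', Set.indicator_of_notMem hω, Set.indicator_of_mem (Set.mem_compl hω)]
  have h1 : ξ' ≤ᵐ[μ] ξ₂ := by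
    filter_upwards [hgood] with ω hg
    by_cases hω : ω ∈ A
    · rw [hξ'_mem ω hω]
      exact (hkey ω hg hω).le
    · rw [hξ'_nmem ω hω]
  have h2 : 0 < μ {ω | ξ' ω < ξ₂ ω} := by
    have hsub : ∀ᵐ ω ∂μ, ω ∈ A → ξ' ω < ξ₂ ω := by
      filter_upwards [hgood] with ω hg hω
      rw [hξ'_mem ω hω]
      exact hkey ω hg hω
    have hnull : μ {ω | ¬(ω ∈ A → ξ' ω < ξ₂ ω)} = 0 := ae_iff.1 hsub
    have hsubset : A ⊆ {ω | ξ' ω < ξ₂ ω} ∪ {ω | ¬(ω ∈ A → ξ' ω < ξ₂ ω)} := by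
      intro ω hω
      by_cases h : ξ' ω < ξ₂ ω
      · exact Or.inl h
      · exact Or.inr fun hi => h (hi hω)
    calc 0 < μ A := hApos
      _ ≤ μ ({ω | ξ' ω < ξ₂ ω} ∪ {ω | ¬(ω ∈ A → ξ' ω < ξ₂ ω)}) := measure_mono hsubset
      _ ≤ μ {ω | ξ' ω < ξ₂ ω} + μ {ω | ¬(ω ∈ A → ξ' ω < ξ₂ ω)} := measure_union_le _ _
      _ = μ {ω | ξ' ω < ξ₂ ω} := by rw [hnull, add_zero]
  have hSM' : StronglyMeasurable[F N] ξ' :=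
    (hSM₁.indicator hA_FN).add (hSM₂.indicator hA_FN.compl)
  have hmem' : MemLp ξ' 2 μ :=
    (hmem₁.indicator hA_m0).add (hmem₂.indicator hA_m0.compl)
  have hstrict : 0 < μ {ω | EE.E t ξ' ω < EE.E t ξ₂ ω} :=
    EE.strictMono t ht ξ' ξ₂ hSM' hmem' hSM₂ hmem₂ h1 h2
  have hzo : EE.E t ξ' =ᵐ[μ] A.indicator (EE.E t ξ₁) + Aᶜ.indicator (EE.E t ξ₂) :=
    EE.zeroOne t ht ξ₁ ξ₂ hSM₁ hmem₁ hSM₂ hmem₂ A hA_Ft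
  have heq : EE.E t ξ' =ᵐ[μ] EE.E t ξ₂ := by
    refine hzo.trans ?_
    filter_upwards [hrep] with ω hω
    simp only [Pi.add_apply]
    by_cases hA' : ω ∈ A
    · rw [Set.indicator_of_mem hA', Set.indicator_of_notMem (Set.notMem_compl_iff.2 hA'),
        hω, add_zero]
    · rw [Set.indicator_of_notMem hA', Set.indicator_of_mem (Set.mem_compl hA'), zero_add]
  have h0 : μ {ω | EE.E t ξ' ω < EE.E t ξ₂ ω} = 0 := by
    refine measure_mono_null (fun ω h => ?_) (ae_iff.1 heq)
    exact ne_of_lt h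
  exact absurd h0 hstrict.ne'

/-- **Uniqueness in the discrete-time stochastic representation problem under a
nonlinear expectation.** If `L₁` and `L₂` are both adapted processes such that, for
every `t ∈ {0,...,N}`, the random variable `∑_{u=t}^{N} f(u, max_{t≤v≤u} Lⁱ_v)` is
square-integrable and `X t = E t [∑_{u=t}^{N} f(u, max_{t≤v≤u} Lⁱ_v)]` a.s., then
`L₁ t = L₂ t` a.s. for every `t ∈ {0,...,N}`. -/
theorem stochastic_representation_uniqueness
    {Ω : Type*} [TopologicalSpace Ω] [PolishSpace Ω]
    [m0 : MeasurableSpace Ω] [BorelSpace Ω]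
    (μ : Measure Ω) [IsProbabilityMeasure μ]
    (F : Filtration ℕ m0) (N : ℕ) (hN : 1 ≤ N)
    (EE : NLExp μ F N)
    (f : Ω → ℕ → ℝ → ℝ)
    (hf_cont : ∀ ω, ∀ t, t ≤ N → Continuous (f ω t))
    (hf_anti : ∀ ω, ∀ t, t ≤ N → StrictAnti (f ω t))
    (hf_top : ∀ ω, ∀ t, t ≤ N → Tendsto (f ω t) atBot atTop)
    (hf_bot : ∀ ω, ∀ t, t ≤ N → Tendsto (f ω t) atTop atBot)
    (hf_adapted : ∀ t, t ≤ N → ∀ l : ℝ, StronglyMeasurable[F t] fun ω => f ω t l)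
    (hf_sqInt : ∀ t, t ≤ N → ∀ l : ℝ, MemLp (fun ω => f ω t l) 2 μ)
    (X : ℕ → Ω → ℝ)
    (hX_adapted : ∀ t, t ≤ N → StronglyMeasurable[F t] (X t))
    (hX_sqInt : ∀ t, t ≤ N → MemLp (X t) 2 μ)
    (L₁ L₂ : ℕ → Ω → ℝ)
    (hL₁_adapted : ∀ t, t ≤ N → StronglyMeasurable[F t] (L₁ t))
    (hL₂_adapted : ∀ t, t ≤ N → StronglyMeasurable[F t] (L₂ t))
    (hL₁_sqInt : ∀ t, t ≤ N →
      MemLp (fun ω => ∑ u ∈ Finset.Icc t N, f ω u (runMax L₁ t u ω)) 2 μ)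
    (hL₂_sqInt : ∀ t, t ≤ N →
      MemLp (fun ω => ∑ u ∈ Finset.Icc t N, f ω u (runMax L₂ t u ω)) 2 μ)
    (hL₁_rep : ∀ t, t ≤ N →
      X t =ᵐ[μ] EE.E t fun ω => ∑ u ∈ Finset.Icc t N, f ω u (runMax L₁ t u ω))
    (hL₂_rep : ∀ t, t ≤ N →
      X t =ᵐ[μ] EE.E t fun ω => ∑ u ∈ Finset.Icc t N, f ω u (runMax L₂ t u ω)) :
    ∀ t, t ≤ N → L₁ t =ᵐ[μ] L₂ t := by
  have key : ∀ k t, t ≤ N → N - t ≤ k → L₁ t =ᵐ[μ] L₂ t := by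
    intro k
    induction k with
    | zero =>
      intro t ht h0
      have hlater : ∀ v, t < v → v ≤ N → L₁ v =ᵐ[μ] L₂ v := by
        intro v hv hvN
        omega
      have hle₁ := uniq_step μ F N EE f hf_cont hf_anti hf_adapted L₁ L₂
        hL₁_adapted hL₂_adapted t ht (hL₁_sqInt t ht) (hL₂_sqInt t ht)
        ((hL₁_rep t ht).symm.trans (hL₂_rep t ht)) hlater
      have hle₂ := uniq_step μ F N EE f hf_cont hf_anti hf_adapted L₂ L₁
        hL₂_adapted hL₁_adapted t ht (hL₂_sqInt t ht) (hL₁_sqInt t ht)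
        ((hL₂_rep t ht).symm.trans (hL₁_rep t ht)) (fun v h1 h2 => (hlater v h1 h2).symm)
      filter_upwards [hle₁, hle₂] with ω ha hb
      exact le_antisymm ha hb
    | succ k ih =>
      intro t ht hk
      have hlater : ∀ v, t < v → v ≤ N → L₁ v =ᵐ[μ] L₂ v := by
        intro v hv hvN
        exact ih v hvN (by omega)
      have hle₁ := uniq_step μ F N EE f hf_cont hf_anti hf_adapted L₁ L₂
        hL₁_adapted hL₂_adapted t ht (hL₁_sqInt t ht) (hL₂_sqInt t ht)
        ((hL₁_rep t ht).symm.trans (hL₂_rep t ht)) hlater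
      have hle₂ := uniq_step μ F N EE f hf_cont hf_anti hf_adapted L₂ L₁
        hL₂_adapted hL₁_adapted t ht (hL₂_sqInt t ht) (hL₁_sqInt t ht)
        ((hL₂_rep t ht).symm.trans (hL₁_rep t ht)) (fun v h1 h2 => (hlater v h1 h2).symm)
      filter_upwards [hle₁, hle₂] with ω ha hb
      exact le_antisymm ha hb
  intro t ht
  exact key (N - t) t ht le_rfl
end

section
/- Lower bound property of the representation solution: let L = (L_t)_{t=0,...,N} be a solution of the stochastic representation problem for X. Then for every stopping time σ ∈ T_{0,N-1} and every τ ∈ T_σ, L_σ ≤ l_{σ,τ} a.s. -/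
open MeasureTheory Filter

namespace RepAux

lemma le_runMax {Ω : Type*} {L : ℕ → Ω → ℝ} {t u v : ℕ} (h1 : t ≤ v) (h2 : v ≤ u) (ω : Ω) :
    L v ω ≤ runMax L t u ω :=
  (Finset.le_fold_max _).2 (Or.inr ⟨v, Finset.mem_Icc.2 ⟨h1, h2⟩, le_rfl⟩)

lemma runMax_mono_left {Ω : Type*} {L : ℕ → Ω → ℝ} {t s u : ℕ} (hts : t ≤ s) (hsu : s ≤ u)
    (ω : Ω) : runMax L s u ω ≤ runMax L t u ω := by
  refine (Finset.fold_max_le _).2 ⟨le_runMax hts hsu ω, fun x hx => ?_⟩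
  obtain ⟨h1, h2⟩ := Finset.mem_Icc.1 hx
  exact le_runMax (hts.trans h1) h2 ω

lemma fold_max_meas {Ω : Type*} {m : MeasurableSpace Ω} (b : Ω → ℝ) (hb : Measurable[m] b)
    (g : ℕ → Ω → ℝ) (s : Finset ℕ) (hg : ∀ v ∈ s, Measurable[m] (g v)) :
    Measurable[m] fun ω => s.fold max (b ω) fun v => g v ω := by
  classical
  induction s using Finset.induction with
  | empty => simpa using hb
  | @insert a s ha ih =>
    have : (fun ω => (insert a s).fold max (b ω) fun v => g v ω)
        = fun ω => max (g a ω) (s.fold max (b ω) fun v => g v ω) := by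
      funext ω; rw [Finset.fold_insert ha]
    rw [this]
    exact (hg a (Finset.mem_insert_self a s)).max
      (ih fun v hv => hg v (Finset.mem_insert_of_mem hv))

lemma runMax_meas {Ω : Type*} {m : MeasurableSpace Ω} {L : ℕ → Ω → ℝ} {t u : ℕ}
    (hL : ∀ v, v ≤ u → Measurable[m] (L v)) (htu : t ≤ u) :
    Measurable[m] (runMax L t u) :=
  fold_max_meas (L t) (hL t htu) L _ fun v hv => hL v (Finset.mem_Icc.1 hv).2

/-- Carathéodory-type composition. -/
lemma comp_sm {Ω : Type*} (m : MeasurableSpace Ω) (f : Ω → ℝ → ℝ)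
    (hmeas : ∀ r : ℝ, StronglyMeasurable[m] fun ω => f ω r)
    (hcont : ∀ ω, Continuous (f ω)) {g : Ω → ℝ} (hg : Measurable[m] g) :
    StronglyMeasurable[m] fun ω => f ω (g ω) := by
  have h := @stronglyMeasurable_uncurry_of_continuous_of_stronglyMeasurable Ω ℝ ℝ
    _ _ _ _ _ _ _ m (fun r ω => f ω r) hcont hmeas
  exact h.comp_measurable (hg.prodMk (@measurable_id Ω m))



variable {Ω : Type*} {m0 : MeasurableSpace Ω} {μ : Measure Ω} {F : Filtration ℕ m0} {N : ℕ}

lemma meq {T : Ω → ℕ} (hT : IsStoppingTime F (fun ω => (T ω : WithTop ℕ))) (s : ℕ) :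
    MeasurableSet[F s] {ω | T ω = s} := by
  have h : {ω | T ω = s} = {ω | (T ω : WithTop ℕ) = (s : WithTop ℕ)} := by ext; simp
  rw [h]; exact hT.measurableSet_eq s

lemma mle {T : Ω → ℕ} (hT : IsStoppingTime F (fun ω => (T ω : WithTop ℕ))) (s : ℕ) :
    MeasurableSet[F s] {ω | T ω ≤ s} := by
  have h : {ω | T ω ≤ s} = {ω | (T ω : WithTop ℕ) ≤ (s : WithTop ℕ)} := by ext; simp
  rw [h]; exact hT s

lemma maxc {T : Ω → ℕ} (hT : IsStoppingTime F (fun ω => (T ω : WithTop ℕ))) (i : ℕ) :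
    IsStoppingTime F (fun ω => ((max (T ω) i : ℕ) : WithTop ℕ)) := by
  have := hT.max_const i; exact this

lemma E_congr (EE : NLExp μ F N) {t : ℕ} (ht : t ≤ N) {ξ η : Ω → ℝ}
    (hξm : StronglyMeasurable[F N] ξ) (hξi : MemLp ξ 2 μ)
    (hηm : StronglyMeasurable[F N] η) (hηi : MemLp η 2 μ) (h : ξ =ᵐ[μ] η) :
    EE.E t ξ =ᵐ[μ] EE.E t η :=
  (EE.mono t ht ξ η hξm hξi hηm hηi h.le).antisymm
    (EE.mono t ht η ξ hηm hηi hξm hξi h.symm.le)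

lemma stopped_eq (g : ℕ → Ω → ℝ) (T : Ω → ℕ) (hT2 : ∀ ω, T ω ≤ N) :
    (fun ω => g (T ω) ω) =
      fun ω => ∑ s ∈ Finset.range (N + 1), ({ω' | T ω' = s}).indicator (g s) ω := by
  funext ω
  rw [Finset.sum_eq_single (T ω)]
  · exact (Set.indicator_of_mem (by simp : ω ∈ {ω' | T ω' = T ω}) _).symm
  · intro s _ hs
    have hnot : ω ∉ {ω' | T ω' = s} := by
      simp only [Set.mem_setOf_eq]
      exact fun h => hs h.symm
    exact Set.indicator_of_notMem hnot _
  · intro h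
    exact absurd (Finset.mem_range.2 (Nat.lt_succ_of_le (hT2 ω))) h

lemma stopped_sm (g : ℕ → Ω → ℝ) (hg : ∀ s, s ≤ N → StronglyMeasurable[F N] (g s))
    (T : Ω → ℕ) (hT : IsStoppingTime F (fun ω => (T ω : WithTop ℕ))) (hT2 : ∀ ω, T ω ≤ N) :
    StronglyMeasurable[F N] fun ω => g (T ω) ω := by
  rw [stopped_eq g T hT2]
  refine Finset.stronglyMeasurable_fun_sum _ fun s hs => ?_
  have hsN : s ≤ N := Nat.lt_succ_iff.mp (Finset.mem_range.mp hs)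
  exact (hg s hsN).indicator (F.mono hsN _ (meq hT s))

lemma stopped_mem (g : ℕ → Ω → ℝ) (hg : ∀ s, s ≤ N → MemLp (g s) 2 μ)
    (T : Ω → ℕ) (hT : IsStoppingTime F (fun ω => (T ω : WithTop ℕ))) (hT2 : ∀ ω, T ω ≤ N) :
    MemLp (fun ω => g (T ω) ω) 2 μ := by
  rw [stopped_eq g T hT2]
  refine memLp_finset_sum _ fun s hs => ?_
  have hsN : s ≤ N := Nat.lt_succ_iff.mp (Finset.mem_range.mp hs)
  exact (hg s hsN).indicator (F.le s _ (meq hT s))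

lemma E_eq_on (EE : NLExp μ F N) {s : ℕ} (hs : s ≤ N) {A : Set Ω}
    (hA : MeasurableSet[F s] A) {ξ η : Ω → ℝ}
    (hξm : StronglyMeasurable[F N] ξ) (hξi : MemLp ξ 2 μ)
    (hηm : StronglyMeasurable[F N] η) (hηi : MemLp η 2 μ)
    (h : ∀ᵐ ω ∂μ, ω ∈ A → ξ ω = η ω) :
    ∀ᵐ ω ∂μ, ω ∈ A → EE.E s ξ ω = EE.E s η ω := by
  have hAm0 : MeasurableSet A := F.le s A hA
  have hAN : MeasurableSet[F N] A := F.mono hs A hA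
  have hχm : StronglyMeasurable[F N] (A.indicator η + Aᶜ.indicator ξ) :=
    (hηm.indicator hAN).add (hξm.indicator hAN.compl)
  have hχi : MemLp (A.indicator η + Aᶜ.indicator ξ) 2 μ :=
    (hηi.indicator hAm0).add (hξi.indicator hAm0.compl)
  have hχξ : (A.indicator η + Aᶜ.indicator ξ) =ᵐ[μ] ξ := by
    filter_upwards [h] with ω hω
    by_cases hωA : ω ∈ A
    · simp only [Pi.add_apply, Set.indicator_of_mem hωA,
        Set.indicator_of_notMem (Set.notMem_compl_iff.mpr hωA), add_zero]
      exact (hω hωA).symm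
    · simp only [Pi.add_apply, Set.indicator_of_notMem hωA,
        Set.indicator_of_mem (Set.mem_compl hωA), zero_add]
  have h1 : EE.E s ξ =ᵐ[μ] EE.E s (A.indicator η + Aᶜ.indicator ξ) :=
    E_congr EE hs hξm hξi hχm hχi hχξ.symm
  have h2 := EE.zeroOne s hs η ξ hηm hηi hξm hξi A hA
  filter_upwards [h1, h2] with ω e1 e2 hωA
  rw [e1, e2]
  simp only [Pi.add_apply, Set.indicator_of_mem hωA,
    Set.indicator_of_notMem (Set.notMem_compl_iff.mpr hωA), add_zero]

lemma tower_stop (EE : NLExp μ F N) :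
    ∀ n t, N ≤ t + n → t ≤ N → ∀ T : Ω → ℕ, IsStoppingTime F (fun ω => (T ω : WithTop ℕ)) →
      (∀ ω, t ≤ T ω) → (∀ ω, T ω ≤ N) → ∀ Θ : Ω → ℝ,
      StronglyMeasurable[F N] Θ → MemLp Θ 2 μ →
      EE.E t (fun ω => EE.E (T ω) Θ ω) =ᵐ[μ] EE.E t Θ := by
  have base : ∀ T : Ω → ℕ, (∀ ω, N ≤ T ω) → (∀ ω, T ω ≤ N) → ∀ Θ : Ω → ℝ,
      StronglyMeasurable[F N] Θ → MemLp Θ 2 μ →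
      EE.E N (fun ω => EE.E (T ω) Θ ω) =ᵐ[μ] EE.E N Θ := by
    intro T hT1 hT2 Θ hΘm hΘi
    have : (fun ω => EE.E (T ω) Θ ω) = EE.E N Θ := by
      funext ω; rw [le_antisymm (hT2 ω) (hT1 ω)]
    rw [this]
    exact EE.tower N N le_rfl le_rfl Θ hΘm hΘi
  intro n
  induction n with
  | zero =>
    intro t htn htN T hT hT1 hT2 Θ hΘm hΘi
    have ht : t = N := le_antisymm htN (by simpa using htn)
    subst ht
    exact base T hT1 hT2 Θ hΘm hΘi
  | succ n ih =>
    intro t htn htN T hT hT1 hT2 Θ hΘm hΘi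
    by_cases hc : N ≤ t
    · have ht : t = N := le_antisymm htN hc
      subst ht
      exact base T hT1 hT2 Θ hΘm hΘi
    · push_neg at hc
      have ht1N : t + 1 ≤ N := hc
      set A : Set Ω := {ω | T ω = t} with hA_def
      have hA : MeasurableSet[F t] A := meq hT t
      set T' : Ω → ℕ := fun ω => max (T ω) (t + 1) with hT'_def
      have hT' : IsStoppingTime F (fun ω => (T' ω : WithTop ℕ)) := maxc hT (t + 1)
      have hT'1 : ∀ ω, t + 1 ≤ T' ω := fun ω => le_max_right _ _
      have hT'2 : ∀ ω, T' ω ≤ N := fun ω => max_le (hT2 ω) ht1N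
      have hETg : ∀ s, s ≤ N → StronglyMeasurable[F N] (EE.E s Θ) :=
        fun s hs => (EE.adapted s hs Θ hΘm hΘi).mono (F.mono hs)
      have hETg' : ∀ s, s ≤ N → MemLp (EE.E s Θ) 2 μ :=
        fun s hs => EE.sqInt s hs Θ hΘm hΘi
      have hETm' : StronglyMeasurable[F N] fun ω => EE.E (T' ω) Θ ω :=
        stopped_sm (fun s => EE.E s Θ) hETg T' hT' hT'2
      have hETi' : MemLp (fun ω => EE.E (T' ω) Θ ω) 2 μ :=
        stopped_mem (fun s => EE.E s Θ) hETg' T' hT' hT'2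
      have hEtm : StronglyMeasurable[F N] (EE.E t Θ) := hETg t htN
      have hEti : MemLp (EE.E t Θ) 2 μ := hETg' t htN
      have hpt : (fun ω => EE.E (T ω) Θ ω) =
          A.indicator (EE.E t Θ) + Aᶜ.indicator (fun ω => EE.E (T' ω) Θ ω) := by
        funext ω
        by_cases hω : T ω = t
        · have hmem : ω ∈ A := hω
          simp only [Pi.add_apply, Set.indicator_of_mem hmem,
            Set.indicator_of_notMem (Set.notMem_compl_iff.mpr hmem), add_zero, hω]
        · have hmem : ω ∉ A := hω
          have hTω : T' ω = T ω := max_eq_left (Nat.succ_le_of_lt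
            (lt_of_le_of_ne (hT1 ω) (Ne.symm hω)))
          simp only [Pi.add_apply, Set.indicator_of_notMem hmem,
            Set.indicator_of_mem (Set.mem_compl hmem), zero_add, hTω]
      have h01 := EE.zeroOne t htN (EE.E t Θ) (fun ω => EE.E (T' ω) Θ ω)
        hEtm hEti hETm' hETi' A hA
      have hih := ih (t + 1) (by omega) ht1N T' hT' hT'1 hT'2 Θ hΘm hΘi
      have htow1 := EE.tower t (t + 1) (Nat.le_succ t) ht1N
        (fun ω => EE.E (T' ω) Θ ω) hETm' hETi'
      have hcong := E_congr EE (t := t) htN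
        ((EE.adapted (t+1) ht1N _ hETm' hETi').mono (F.mono ht1N))
        (EE.sqInt (t+1) ht1N _ hETm' hETi')
        (hETg (t+1) ht1N) (hETg' (t+1) ht1N) hih
      have htow2 := EE.tower t (t + 1) (Nat.le_succ t) ht1N Θ hΘm hΘi
      have hET' : EE.E t (fun ω => EE.E (T' ω) Θ ω) =ᵐ[μ] EE.E t Θ :=
        htow1.symm.trans (hcong.trans htow2)
      have htt := EE.tower t t le_rfl htN Θ hΘm hΘi
      rw [hpt]
      refine h01.trans ?_
      filter_upwards [htt, hET'] with ω e1 e2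
      by_cases hω : ω ∈ A
      · simp only [Pi.add_apply, Set.indicator_of_mem hω,
          Set.indicator_of_notMem (Set.notMem_compl_iff.mpr hω), add_zero, e1]
      · simp only [Pi.add_apply, Set.indicator_of_notMem hω,
          Set.indicator_of_mem (Set.mem_compl hω), zero_add, e2]

lemma translation_stop (EE : NLExp μ F N) (T : Ω → ℕ) (hT : IsStoppingTime F (fun ω => (T ω : WithTop ℕ)))
    (hT2 : ∀ ω, T ω ≤ N) (ζ η : Ω → ℝ)
    (hζm : StronglyMeasurable[F N] ζ) (hζi : MemLp ζ 2 μ)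
    (hζs : ∀ s, s ≤ N → StronglyMeasurable[F s] ({ω | T ω = s}.indicator ζ))
    (hηm : StronglyMeasurable[F N] η) (hηi : MemLp η 2 μ) :
    ∀ᵐ ω ∂μ, EE.E (T ω) (fun ω' => η ω' + ζ ω') ω = EE.E (T ω) η ω + ζ ω := by
  have hsum_m : StronglyMeasurable[F N] fun ω' => η ω' + ζ ω' := hηm.add hζm
  have hsum_i : MemLp (fun ω' => η ω' + ζ ω') 2 μ := hηi.add hζi
  have key : ∀ s, ∀ᵐ ω ∂μ, s ≤ N → ω ∈ {ω' | T ω' = s} →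
      EE.E s (fun ω' => η ω' + ζ ω') ω = EE.E s η ω + ζ ω := by
    intro s
    by_cases hs : s ≤ N
    · set A : Set Ω := {ω' | T ω' = s} with hA_def
      have hA : MeasurableSet[F s] A := meq hT s
      set φ : Ω → ℝ := A.indicator ζ with hφ_def
      have hφm : StronglyMeasurable[F N] φ := hζm.indicator (F.mono hs A hA)
      have hφi : MemLp φ 2 μ := hζi.indicator (F.le s A hA)
      have hφsm : StronglyMeasurable[F s] φ := hζs s hs
      have h1 : ∀ᵐ ω ∂μ, ω ∈ A →
          EE.E s (fun ω' => η ω' + ζ ω') ω = EE.E s (fun ω' => η ω' + φ ω') ω :=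
        E_eq_on EE hs hA hsum_m hsum_i (hηm.add hφm) (hηi.add hφi)
          (Filter.Eventually.of_forall fun ω hωA => by
            simp only [hφ_def, Set.indicator_of_mem hωA])
      have h2 := EE.translation s hs η φ hηm hηi hφsm hφi
      have h2' : EE.E s (fun ω' => η ω' + φ ω') =ᵐ[μ] fun ω => EE.E s η ω + φ ω := h2
      filter_upwards [h1, h2'] with ω e1 e2 _ hωA
      rw [e1 hωA, e2, hφ_def, Set.indicator_of_mem hωA]
    · exact Filter.Eventually.of_forall fun ω h => absurd h hs
  have hall := ae_all_iff.2 key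
  filter_upwards [hall] with ω hω
  exact hω (T ω) (hT2 ω) rfl

lemma rep_stop (EE : NLExp μ F N) (g : ℕ → Ω → ℝ)
    (hgm : ∀ s, s ≤ N → StronglyMeasurable[F N] (g s))
    (hgi : ∀ s, s ≤ N → MemLp (g s) 2 μ) (Y : ℕ → Ω → ℝ)
    (hrep : ∀ s, s ≤ N → Y s =ᵐ[μ] EE.E s (g s))
    (T : Ω → ℕ) (hT : IsStoppingTime F (fun ω => (T ω : WithTop ℕ))) (hT2 : ∀ ω, T ω ≤ N) :
    ∀ᵐ ω ∂μ, EE.E (T ω) (fun ω' => g (T ω') ω') ω = Y (T ω) ω := by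
  have hηm : StronglyMeasurable[F N] fun ω' => g (T ω') ω' := stopped_sm g hgm T hT hT2
  have hηi : MemLp (fun ω' => g (T ω') ω') 2 μ := stopped_mem g hgi T hT hT2
  have key : ∀ s, ∀ᵐ ω ∂μ, s ≤ N → ω ∈ {ω' | T ω' = s} →
      EE.E s (fun ω' => g (T ω') ω') ω = Y s ω := by
    intro s
    by_cases hs : s ≤ N
    · have hA : MeasurableSet[F s] {ω' | T ω' = s} := meq hT s
      have h1 : ∀ᵐ ω ∂μ, ω ∈ {ω' | T ω' = s} →
          EE.E s (fun ω' => g (T ω') ω') ω = EE.E s (g s) ω :=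
        E_eq_on EE hs hA hηm hηi (hgm s hs) (hgi s hs)
          (Filter.Eventually.of_forall fun ω hωA => by
            rw [Set.mem_setOf.1 hωA])
      filter_upwards [h1, hrep s hs] with ω e1 e2 _ hωA
      rw [e1 hωA, ← e2]
    · exact Filter.Eventually.of_forall fun ω h => absurd h hs
  have hall := ae_all_iff.2 key
  filter_upwards [hall] with ω hω
  exact hω (T ω) (hT2 ω) rfl

lemma indicator_stopped_meas {σ : Ω → ℕ} (hσ : IsStoppingTime F (fun ω => (σ ω : WithTop ℕ)))
    {l : Ω → ℝ} (hl : StronglyMeasurable[hσ.measurableSpace] l) (t : ℕ) :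
    Measurable[F t] ({ω | σ ω = t}.indicator l) := by
  classical
  have hset : MeasurableSet[hσ.measurableSpace] {ω | σ ω = t} := by
    rw [hσ.measurableSet]
    refine ⟨le_iSup (fun i => (F i : MeasurableSpace Ω)) t _ (meq hσ t), fun j => ?_⟩
    by_cases hj : t ≤ j
    · exact (F.mono hj _ (meq hσ t)).inter (hσ j)
    · convert @MeasurableSet.empty _ (F j) using 1
      ext ω; simp only [Set.mem_inter_iff, Set.mem_setOf_eq, Set.mem_empty_iff_false,
        iff_false, not_and]
      intro h; rw [h]; exact fun h2 => hj (WithTop.coe_le_coe.1 h2)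
  intro s hs
  have hpre : {ω | σ ω = t}.indicator l ⁻¹' s =
      (l ⁻¹' s ∩ {ω | σ ω = t}) ∪ ({ω | σ ω = t}ᶜ ∩ (if (0 : ℝ) ∈ s then Set.univ else ∅)) := by
    ext ω
    by_cases hω : ω ∈ {ω' | σ ω' = t}
    · simp only [Set.mem_preimage, Set.indicator_of_mem hω, Set.mem_union, Set.mem_inter_iff,
        Set.mem_compl_iff, hω, and_true, not_true_eq_false, false_and, or_false]
    · simp only [Set.mem_preimage, Set.indicator_of_notMem hω, Set.mem_union, Set.mem_inter_iff,
        Set.mem_compl_iff, hω, and_false, not_false_eq_true, true_and, false_or]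
      by_cases h0 : (0 : ℝ) ∈ s <;> simp [h0]
  rw [hpre]
  have h1 : MeasurableSet[F t] (l ⁻¹' s ∩ {ω | σ ω = t}) :=
    by
      have hseteq : {ω | σ ω = t} = {ω | (σ ω : WithTop ℕ) = (t : WithTop ℕ)} := by ext; simp
      rw [hseteq] at hset ⊢
      exact (hσ.measurableSet_inter_eq_iff (l ⁻¹' s) t).1 ((hl.measurable hs).inter hset)
  refine h1.union (MeasurableSet.inter ?_ ?_)
  · exact (meq hσ t).compl
  · by_cases h0 : (0 : ℝ) ∈ s <;> simp [h0]

end RepAux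

/-- **Lower bound property of the representation solution.** If `L` solves the
stochastic representation problem for `X`, then for every stopping time
`σ ∈ T_{0,N-1}` and every `τ ∈ T_σ`, one has `L_σ ≤ l_{σ,τ}` a.s., where `l_{σ,τ}`
is the (a.s. unique) `F_σ`-measurable solution of
`X_σ = E_σ[∑_{u=σ}^{τ-1} f(u, l_{σ,τ}) + X_τ]`. -/
theorem representation_solution_lower_bound
{Ω : Type*} [TopologicalSpace Ω] [PolishSpace Ω]
    [m0 : MeasurableSpace Ω] [BorelSpace Ω]
    (μ : Measure Ω) [IsProbabilityMeasure μ]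
    (F : Filtration ℕ m0) (N : ℕ) (hN : 1 ≤ N)
    (EE : NLExp μ F N)
(f : Ω → ℕ → ℝ → ℝ)
    (hf_cont : ∀ ω, ∀ t, t ≤ N → Continuous (f ω t))
    (hf_anti : ∀ ω, ∀ t, t ≤ N → StrictAnti (f ω t))
    (hf_top : ∀ ω, ∀ t, t ≤ N → Tendsto (f ω t) atBot atTop)
    (hf_bot : ∀ ω, ∀ t, t ≤ N → Tendsto (f ω t) atTop atBot)
    (hf_adapted : ∀ t, t ≤ N → ∀ l : ℝ, StronglyMeasurable[F t] fun ω => f ω t l)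
    (hf_sqInt : ∀ t, t ≤ N → ∀ l : ℝ, MemLp (fun ω => f ω t l) 2 μ)
(X : ℕ → Ω → ℝ)
    (hX_adapted : ∀ t, t ≤ N → StronglyMeasurable[F t] (X t))
    (hX_sqInt : ∀ t, t ≤ N → MemLp (X t) 2 μ)
(L : ℕ → Ω → ℝ)
    (hL_adapted : ∀ t, t ≤ N → StronglyMeasurable[F t] (L t))
    (hL_sqInt : ∀ t, t ≤ N →
      MemLp (fun ω => ∑ u ∈ Finset.Icc t N, f ω u (runMax L t u ω)) 2 μ)
    (hL_rep : ∀ t, t ≤ N →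
      X t =ᵐ[μ] EE.E t fun ω => ∑ u ∈ Finset.Icc t N, f ω u (runMax L t u ω))
    (σ : Ω → ℕ) (hσ : IsStoppingTime F (fun ω => (σ ω : WithTop ℕ))) (hσ_le : ∀ ω, σ ω ≤ N)
    (hσ_lt : ∀ᵐ ω ∂μ, σ ω < N)
    (τ : Ω → ℕ) (hτ : IsStoppingTime F (fun ω => (τ ω : WithTop ℕ))) (hτ_le : ∀ ω, τ ω ≤ N)
    (hστ : ∀ᵐ ω ∂μ, σ ω < N → σ ω < τ ω)
    (l : Ω → ℝ) (hl_meas : StronglyMeasurable[hσ.measurableSpace] l)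
    (hl_sqInt : MemLp (fun ω => ∑ u ∈ Finset.Ico (σ ω) (τ ω), f ω u (l ω)) 2 μ)
    (hl_rep : (fun ω => X (σ ω) ω) =ᵐ[μ] fun ω => EE.E (σ ω)
      (fun ω' => (∑ u ∈ Finset.Ico (σ ω') (τ ω'), f ω' u (l ω')) + X (τ ω') ω') ω) :
    ∀ᵐ ω ∂μ, L (σ ω) ω ≤ l ω := by
  classical
  have hFNle : (F N : MeasurableSpace Ω) ≤ m0 := F.le N
  set ξs : ℕ → Ω → ℝ := fun s ω => ∑ u ∈ Finset.Icc s N, f ω u (runMax L s u ω) with hξs_def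
  have hLmeas : ∀ v, v ≤ N → Measurable[F N] (L v) :=
    fun v hv => ((hL_adapted v hv).mono (F.mono hv)).measurable
  have hrm_meas : ∀ s u, s ≤ u → u ≤ N → Measurable[F N] (runMax L s u) :=
    fun s u hsu huN => RepAux.runMax_meas (fun v hv => hLmeas v (hv.trans huN)) hsu
  have hf_smN : ∀ u, u ≤ N → ∀ r : ℝ, StronglyMeasurable[F N] fun ω => f ω u r :=
    fun u hu r => (hf_adapted u hu r).mono (F.mono hu)
  have hcomp : ∀ u, u ≤ N → ∀ g : Ω → ℝ, Measurable[F N] g →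
      StronglyMeasurable[F N] fun ω => f ω u (g ω) :=
    fun u hu g hg => RepAux.comp_sm (F N) (fun ω r => f ω u r) (hf_smN u hu)
      (fun ω => hf_cont ω u hu) hg
  have hξsm : ∀ s, s ≤ N → StronglyMeasurable[F N] (ξs s) := by
    intro s hs
    simp only [hξs_def]
    refine Finset.stronglyMeasurable_fun_sum _ fun u hu => ?_
    obtain ⟨h1, h2⟩ := Finset.mem_Icc.1 hu
    exact hcomp u h2 _ (hrm_meas s u h1 h2)
  have hξsi : ∀ s, s ≤ N → MemLp (ξs s) 2 μ := fun s hs => hL_sqInt s hs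
  have hXsmN : ∀ s, s ≤ N → StronglyMeasurable[F N] (X s) :=
    fun s hs => (hX_adapted s hs).mono (F.mono hs)
  have hl_mN : Measurable[F N] l :=
    (hl_meas.mono (hσ.measurableSpace_le_of_le_const (fun ω => WithTop.coe_le_coe.2 (hσ_le ω)))).measurable
  -- main step: for each t < N, the bad set is null
  have key : ∀ t, t < N → μ {ω | σ ω = t ∧ l ω < L t ω} = 0 := by
    intro t ht
    have htN : t ≤ N := ht.le
    have ht1N : t + 1 ≤ N := ht
    by_contra hμB
    set B : Set Ω := {ω | σ ω = t ∧ l ω < L t ω} with hB_def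
    have hposB : 0 < μ B := pos_iff_ne_zero.mpr hμB
    set lB : Ω → ℝ := {ω | σ ω = t}.indicator l with hlB_def
    have hlB_t : Measurable[F t] lB := RepAux.indicator_stopped_meas hσ hl_meas t
    have hBeq : B = {ω | σ ω = t} ∩ {ω | lB ω < L t ω} := by
      ext ω
      simp only [hB_def, Set.mem_setOf_eq, Set.mem_inter_iff]
      constructor
      · rintro ⟨h1, h2⟩
        refine ⟨h1, ?_⟩
        rw [hlB_def, Set.indicator_of_mem (show ω ∈ {ω' | σ ω' = t} from h1)]
        exact h2
      · rintro ⟨h1, h2⟩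
        rw [hlB_def, Set.indicator_of_mem (show ω ∈ {ω' | σ ω' = t} from h1)] at h2
        exact ⟨h1, h2⟩
    have hB : MeasurableSet[F t] B := by
      rw [hBeq]
      exact (RepAux.meq hσ t).inter
        (measurableSet_lt hlB_t (hL_adapted t htN).measurable)
    have hBN : MeasurableSet[F N] B := F.mono htN _ hB
    have hBm0 : MeasurableSet B := F.le t _ hB
    set T : Ω → ℕ := fun ω => max (τ ω) (t + 1) with hT_def
    have hT : IsStoppingTime F (fun ω => (T ω : WithTop ℕ)) := RepAux.maxc hτ (t + 1)
    have hT1 : ∀ ω, t + 1 ≤ T ω := fun ω => le_max_right _ _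
    have hT1' : ∀ ω, t ≤ T ω := fun ω => (Nat.le_succ t).trans (hT1 ω)
    have hT2 : ∀ ω, T ω ≤ N := fun ω => max_le (hτ_le ω) ht1N
    set g : ℕ → Ω → ℝ := fun s ω => ∑ u ∈ Finset.Ico t s, f ω u (lB ω) with hg_def
    have hlB_N : Measurable[F N] lB := hlB_t.mono (F.mono htN) le_rfl
    have hg_N : ∀ s, s ≤ N → StronglyMeasurable[F N] (g s) := by
      intro s hs
      simp only [hg_def]
      refine Finset.stronglyMeasurable_fun_sum _ fun u hu => ?_
      obtain ⟨h1, h2⟩ := Finset.mem_Ico.1 hu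
      exact hcomp u ((le_of_lt h2).trans hs) _ hlB_N
    set ζ : Ω → ℝ := B.indicator (fun ω => g (T ω) ω) with hζ_def
    have hζ_smN : StronglyMeasurable[F N] ζ :=
      (RepAux.stopped_sm g hg_N T hT hT2).indicator hBN
    have hζs : ∀ s, s ≤ N → StronglyMeasurable[F s] ({ω | T ω = s}.indicator ζ) := by
      intro s hs
      by_cases hts : t + 1 ≤ s
      · have hgs : StronglyMeasurable[F s] (g s) := by
          simp only [hg_def]
          refine Finset.stronglyMeasurable_fun_sum _ fun u hu => ?_
          obtain ⟨h1, h2⟩ := Finset.mem_Ico.1 hu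
          exact RepAux.comp_sm (F s) (fun ω r => f ω u r)
            (fun r => (hf_adapted u ((le_of_lt h2).trans hs) r).mono (F.mono (le_of_lt h2)))
            (fun ω => hf_cont ω u ((le_of_lt h2).trans hs))
            (hlB_t.mono (F.mono (by omega)) le_rfl)
        have heq2 : {ω | T ω = s}.indicator ζ
            = {ω | T ω = s}.indicator (B.indicator (g s)) := by
          funext ω
          by_cases hω : ω ∈ {ω' | T ω' = s}
          · rw [Set.indicator_of_mem hω, Set.indicator_of_mem hω, hζ_def]
            by_cases hωB : ω ∈ B
            · rw [Set.indicator_of_mem hωB, Set.indicator_of_mem hωB]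
              have : T ω = s := hω
              rw [this]
            · rw [Set.indicator_of_notMem hωB, Set.indicator_of_notMem hωB]
          · rw [Set.indicator_of_notMem hω, Set.indicator_of_notMem hω]
        rw [heq2]
        exact (hgs.indicator (F.mono (show t ≤ s by omega) _ hB)).indicator
          (RepAux.meq hT s)
      · have hempty : {ω | T ω = s} = ∅ := by
          ext ω
          simp only [Set.mem_setOf_eq, Set.mem_empty_iff_false, iff_false]
          intro h
          have := hT1 ω
          omega
        rw [hempty, Set.indicator_empty]
        exact stronglyMeasurable_const
    have hζZ : ζ =ᵐ[μ] B.indicator (fun ω => ∑ u ∈ Finset.Ico (σ ω) (τ ω), f ω u (l ω)) := by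
      filter_upwards [hστ] with ω hω
      by_cases hωB : ω ∈ B
      · have h1 : σ ω = t := hωB.1
        have hτω : t < τ ω := by
          have h' := hω (by rw [h1]; exact ht)
          omega
        have hTτ : T ω = τ ω := max_eq_left (by omega)
        have hlBω : lB ω = l ω := by
          rw [hlB_def]
          exact Set.indicator_of_mem (show ω ∈ {ω' | σ ω' = t} from h1) l
        rw [hζ_def, Set.indicator_of_mem hωB, Set.indicator_of_mem hωB]
        simp only [hg_def, hTτ, hlBω, h1]
      · rw [hζ_def, Set.indicator_of_notMem hωB, Set.indicator_of_notMem hωB]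
    have hζ_mem : MemLp ζ 2 μ := (hl_sqInt.indicator hBm0).ae_eq hζZ.symm
    set η : Ω → ℝ := fun ω' => ξs (T ω') ω' with hη_def
    have hη_sm : StronglyMeasurable[F N] η := RepAux.stopped_sm ξs hξsm T hT hT2
    have hη_mem : MemLp η 2 μ := RepAux.stopped_mem ξs hξsi T hT hT2
    set Θ : Ω → ℝ := fun ω' => η ω' + ζ ω' with hΘ_def
    have hΘ_sm : StronglyMeasurable[F N] Θ := hη_sm.add hζ_smN
    have hΘ_mem : MemLp Θ 2 μ := hη_mem.add hζ_mem
    have hs1 := RepAux.tower_stop EE N t (Nat.le_add_left N t) htN T hT hT1' hT2 Θ hΘ_sm hΘ_mem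
    have hs2 := RepAux.translation_stop EE T hT hT2 ζ η hζ_smN hζ_mem hζs hη_sm hη_mem
    have hs3 := RepAux.rep_stop EE ξs hξsm hξsi X (fun s hs => hL_rep s hs) T hT hT2
    set Ξ : Ω → ℝ := fun ω => X (T ω) ω + ζ ω with hΞ_def
    have hs4 : (fun ω => EE.E (T ω) Θ ω) =ᵐ[μ] Ξ := by
      filter_upwards [hs2, hs3] with ω e2 e3
      rw [← hη_def] at e3
      simp only [hΘ_def]
      rw [e2, e3, hΞ_def]
    have hXT_sm : StronglyMeasurable[F N] fun ω => X (T ω) ω :=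
      RepAux.stopped_sm X hXsmN T hT hT2
    have hXT_mem : MemLp (fun ω => X (T ω) ω) 2 μ :=
      RepAux.stopped_mem X (fun s hs => hX_sqInt s hs) T hT hT2
    have hΞ_sm : StronglyMeasurable[F N] Ξ := hXT_sm.add hζ_smN
    have hΞ_mem : MemLp Ξ 2 μ := hXT_mem.add hζ_mem
    have hETΘ_sm : StronglyMeasurable[F N] fun ω => EE.E (T ω) Θ ω :=
      RepAux.stopped_sm (fun s => EE.E s Θ)
        (fun s hs => (EE.adapted s hs Θ hΘ_sm hΘ_mem).mono (F.mono hs)) T hT hT2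
    have hETΘ_mem : MemLp (fun ω => EE.E (T ω) Θ ω) 2 μ :=
      RepAux.stopped_mem (fun s => EE.E s Θ)
        (fun s hs => EE.sqInt s hs Θ hΘ_sm hΘ_mem) T hT hT2
    have hs5 : EE.E t (fun ω => EE.E (T ω) Θ ω) =ᵐ[μ] EE.E t Ξ :=
      RepAux.E_congr EE htN hETΘ_sm hETΘ_mem hΞ_sm hΞ_mem hs4
    have hs6 : EE.E t Θ =ᵐ[μ] EE.E t Ξ := hs1.symm.trans hs5
    -- the function from hl_rep
    have hpart1_eq : (fun ω => ∑ u ∈ Finset.Ico (σ ω) (τ ω), f ω u (l ω)) =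
        fun ω => ∑ u ∈ Finset.range N,
          ({ω' | σ ω' ≤ u ∧ u < τ ω'}).indicator (fun ω' => f ω' u (l ω')) ω := by
      funext ω
      have hfe : (Finset.range N).filter (fun u => σ ω ≤ u ∧ u < τ ω)
          = Finset.Ico (σ ω) (τ ω) := by
        ext u
        simp only [Finset.mem_filter, Finset.mem_range, Finset.mem_Ico]
        constructor
        · rintro ⟨_, h⟩; exact h
        · intro h; exact ⟨lt_of_lt_of_le h.2 (hτ_le ω), h⟩
      calc ∑ u ∈ Finset.Ico (σ ω) (τ ω), f ω u (l ω)
          = ∑ u ∈ (Finset.range N).filter (fun u => σ ω ≤ u ∧ u < τ ω), f ω u (l ω) := by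
            rw [hfe]
        _ = ∑ u ∈ Finset.range N, if σ ω ≤ u ∧ u < τ ω then f ω u (l ω) else 0 :=
            Finset.sum_filter _ _
        _ = ∑ u ∈ Finset.range N,
              ({ω' | σ ω' ≤ u ∧ u < τ ω'}).indicator (fun ω' => f ω' u (l ω')) ω := by
            refine Finset.sum_congr rfl fun u _ => ?_
            by_cases hc : σ ω ≤ u ∧ u < τ ω
            · rw [if_pos hc, Set.indicator_of_mem (show ω ∈ {ω' | σ ω' ≤ u ∧ u < τ ω'} from hc)]
            · rw [if_neg hc, Set.indicator_of_notMem (show ω ∉ {ω' | σ ω' ≤ u ∧ u < τ ω'} from hc)]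
    have hpart1_sm : StronglyMeasurable[F N]
        fun ω => ∑ u ∈ Finset.Ico (σ ω) (τ ω), f ω u (l ω) := by
      rw [hpart1_eq]
      refine Finset.stronglyMeasurable_fun_sum _ fun u hu => ?_
      have huN : u ≤ N := (Finset.mem_range.1 hu).le
      have hset : MeasurableSet[F N] {ω' | σ ω' ≤ u ∧ u < τ ω'} := by
        have h1 : MeasurableSet[F N] {ω' | σ ω' ≤ u} := F.mono huN _ (RepAux.mle hσ u)
        have h2 : MeasurableSet[F N] {ω' | u < τ ω'} := by
          have h2' : MeasurableSet[F N] {ω' | τ ω' ≤ u} := F.mono huN _ (RepAux.mle hτ u)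
          have hcompl : {ω' | u < τ ω'} = {ω' | τ ω' ≤ u}ᶜ := by
            ext ω'
            simp [not_le]
          rw [hcompl]
          exact h2'.compl
        have hinter : {ω' | σ ω' ≤ u ∧ u < τ ω'} = {ω' | σ ω' ≤ u} ∩ {ω' | u < τ ω'} := rfl
        rw [hinter]
        exact h1.inter h2
      exact (hcomp u huN l hl_mN).indicator hset
    have hΦ_sm : StronglyMeasurable[F N]
        (fun ω' => (∑ u ∈ Finset.Ico (σ ω') (τ ω'), f ω' u (l ω')) + X (τ ω') ω') :=
      hpart1_sm.add (RepAux.stopped_sm X hXsmN τ hτ hτ_le)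
    have hΦ_mem : MemLp
        (fun ω' => (∑ u ∈ Finset.Ico (σ ω') (τ ω'), f ω' u (l ω')) + X (τ ω') ω') 2 μ :=
      hl_sqInt.add (RepAux.stopped_mem X (fun s hs => hX_sqInt s hs) τ hτ hτ_le)
    have hs7 : ∀ᵐ ω ∂μ, ω ∈ B → Ξ ω =
        (fun ω' => (∑ u ∈ Finset.Ico (σ ω') (τ ω'), f ω' u (l ω')) + X (τ ω') ω') ω := by
      filter_upwards [hστ] with ω hω hωB
      have h1 : σ ω = t := hωB.1
      have hτω : t < τ ω := by
        have h' := hω (by rw [h1]; exact ht)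
        omega
      have hTτ : T ω = τ ω := max_eq_left (by omega)
      have hlBω : lB ω = l ω := by
        rw [hlB_def]
        exact Set.indicator_of_mem (show ω ∈ {ω' | σ ω' = t} from h1) l
      have e1 : ζ ω = ∑ u ∈ Finset.Ico (σ ω) (τ ω), f ω u (l ω) := by
        rw [hζ_def, Set.indicator_of_mem hωB]
        simp only [hg_def, hTτ, hlBω, h1]
      simp only [hΞ_def]
      rw [e1, hTτ]
      exact add_comm _ _
    have hs8 : ∀ᵐ ω ∂μ, ω ∈ B → EE.E t Ξ ω = EE.E t
        (fun ω' => (∑ u ∈ Finset.Ico (σ ω') (τ ω'), f ω' u (l ω')) + X (τ ω') ω') ω :=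
      RepAux.E_eq_on EE htN hB hΞ_sm hΞ_mem hΦ_sm hΦ_mem hs7
    have hs9 : ∀ᵐ ω ∂μ, ω ∈ B → X t ω = EE.E t
        (fun ω' => (∑ u ∈ Finset.Ico (σ ω') (τ ω'), f ω' u (l ω')) + X (τ ω') ω') ω := by
      filter_upwards [hl_rep] with ω e hωB
      have h1 : σ ω = t := hωB.1
      rw [← h1]
      exact e
    have hl5 : ∀ᵐ ω ∂μ, ω ∈ B → EE.E t Θ ω = X t ω := by
      filter_upwards [hs6, hs8, hs9] with ω e6 e8 e9 hωB
      rw [e6, e8 hωB, ← e9 hωB]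
    -- comparison
    have hΘG : ∀ ω ∈ B, ξs t ω < Θ ω := by
      intro ω hω
      have h1 : σ ω = t := hω.1
      have h2 : l ω < L t ω := hω.2
      have hlBω : lB ω = l ω := by
        rw [hlB_def]
        exact Set.indicator_of_mem (show ω ∈ {ω' | σ ω' = t} from h1) l
      have hsplit : ξs t ω = (∑ u ∈ Finset.Ico t (T ω), f ω u (runMax L t u ω))
          + ∑ u ∈ Finset.Icc (T ω) N, f ω u (runMax L t u ω) := by
        simp only [hξs_def]
        rw [← Finset.Ico_add_one_right_eq_Icc, ← Finset.Ico_add_one_right_eq_Icc]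
        exact (Finset.sum_Ico_consecutive _ (hT1' ω) ((hT2 ω).trans (Nat.le_succ N))).symm
      have hΘω : Θ ω = (∑ u ∈ Finset.Icc (T ω) N, f ω u (runMax L (T ω) u ω))
          + ∑ u ∈ Finset.Ico t (T ω), f ω u (l ω) := by
        simp only [hΘ_def, hη_def, hξs_def, hζ_def, Set.indicator_of_mem hω, hg_def, hlBω]
      have hA1 : ∑ u ∈ Finset.Ico t (T ω), f ω u (runMax L t u ω)
          < ∑ u ∈ Finset.Ico t (T ω), f ω u (l ω) := by
        refine Finset.sum_lt_sum_of_nonempty ⟨t, Finset.mem_Ico.2 ⟨le_rfl, hT1 ω⟩⟩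
          fun u hu => ?_
        obtain ⟨hu1, hu2⟩ := Finset.mem_Ico.1 hu
        have huN : u ≤ N := (le_of_lt hu2).trans (hT2 ω)
        exact hf_anti ω u huN (lt_of_lt_of_le h2 (RepAux.le_runMax le_rfl hu1 ω))
      have hA2 : ∑ u ∈ Finset.Icc (T ω) N, f ω u (runMax L t u ω)
          ≤ ∑ u ∈ Finset.Icc (T ω) N, f ω u (runMax L (T ω) u ω) := by
        refine Finset.sum_le_sum fun u hu => ?_
        obtain ⟨hu1, hu2⟩ := Finset.mem_Icc.1 hu
        exact (hf_anti ω u hu2).antitone (RepAux.runMax_mono_left (hT1' ω) hu1 ω)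
      rw [hsplit, hΘω]
      linarith
    set Ψ : Ω → ℝ := B.indicator Θ + Bᶜ.indicator (ξs t) with hΨ_def
    have hG_sm : StronglyMeasurable[F N] (ξs t) := hξsm t htN
    have hG_mem : MemLp (ξs t) 2 μ := hξsi t htN
    have hΨ_sm : StronglyMeasurable[F N] Ψ :=
      (hΘ_sm.indicator hBN).add (hG_sm.indicator hBN.compl)
    have hΨ_mem : MemLp Ψ 2 μ :=
      (hΘ_mem.indicator hBm0).add (hG_mem.indicator hBm0.compl)
    have hle : ξs t ≤ᵐ[μ] Ψ := by
      refine Filter.Eventually.of_forall fun ω => ?_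
      by_cases hω : ω ∈ B
      · simp only [hΨ_def, Pi.add_apply, Set.indicator_of_mem hω,
          Set.indicator_of_notMem (Set.notMem_compl_iff.mpr hω), add_zero]
        exact (hΘG ω hω).le
      · simp only [hΨ_def, Pi.add_apply, Set.indicator_of_notMem hω,
          Set.indicator_of_mem (Set.mem_compl hω), zero_add, le_refl]
    have hsub : B ⊆ {ω | ξs t ω < Ψ ω} := by
      intro ω hω
      simp only [Set.mem_setOf_eq, hΨ_def, Pi.add_apply, Set.indicator_of_mem hω,
        Set.indicator_of_notMem (Set.notMem_compl_iff.mpr hω), add_zero]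
      exact hΘG ω hω
    have hposlt : 0 < μ {ω | ξs t ω < Ψ ω} := lt_of_lt_of_le hposB (measure_mono hsub)
    have hstrict := EE.strictMono t htN (ξs t) Ψ hG_sm hG_mem hΨ_sm hΨ_mem hle hposlt
    have h01 := EE.zeroOne t htN Θ (ξs t) hΘ_sm hΘ_mem hG_sm hG_mem B hB
    have hfold : (fun ω => ∑ u ∈ Finset.Icc t N, f ω u (runMax L t u ω)) = ξs t := by
      rw [hξs_def]
    have heq : EE.E t Ψ =ᵐ[μ] EE.E t (ξs t) := by
      have h01' : EE.E t Ψ =ᵐ[μ] B.indicator (EE.E t Θ) + Bᶜ.indicator (EE.E t (ξs t)) := by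
        rw [hΨ_def]
        exact h01
      refine h01'.trans ?_
      have her := hL_rep t htN
      rw [hfold] at her
      filter_upwards [hl5, her] with ω e5 er
      by_cases hω : ω ∈ B
      · simp only [Pi.add_apply, Set.indicator_of_mem hω,
          Set.indicator_of_notMem (Set.notMem_compl_iff.mpr hω), add_zero]
        rw [e5 hω, er]
      · simp only [Pi.add_apply, Set.indicator_of_notMem hω,
          Set.indicator_of_mem (Set.mem_compl hω), zero_add]
    have h0 : μ {ω | ¬ (EE.E t Ψ ω = EE.E t (ξs t) ω)} = 0 := ae_iff.mp heq
    have hzero : μ {ω | EE.E t (ξs t) ω < EE.E t Ψ ω} = 0 :=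
      measure_mono_null (fun ω hω => ne_of_gt hω) h0
    exact absurd hzero hstrict.ne'
  -- conclusion
  have hae : ∀ᵐ ω ∂μ, ∀ t, ¬(t < N ∧ σ ω = t ∧ l ω < L t ω) := by
    rw [ae_all_iff]
    intro t
    by_cases ht : t < N
    · have h0 := key t ht
      have h0' : ∀ᵐ ω ∂μ, ω ∉ {ω | σ ω = t ∧ l ω < L t ω} :=
        measure_eq_zero_iff_ae_notMem.1 h0
      filter_upwards [h0'] with ω hω
      rintro ⟨_, h2, h3⟩
      exact hω ⟨h2, h3⟩
    · exact Filter.Eventually.of_forall fun ω h => ht h.1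
  filter_upwards [hσ_lt, hae] with ω h1 h2
  by_contra hcon
  push_neg at hcon
  exact h2 (σ ω) ⟨h1, rfl, hcon⟩
end

section
/- Level-crossing principle, upper level-passage time: define the stopping time τ̄ := min{ v ∈ {0,...,N-1} : L_v > 0 } ∧ N. Then τ̄ is optimal for the optimal stopping problem under the nonlinear expectation, i.e., for every stopping time τ ∈ T_{0,N}, E_0[X_τ] ≤ E_0[X_{τ̄}] a.s. -/
open MeasureTheory Filter

section AuxLemmas

variable {Ω : Type*}

lemma le_runMax (L : ℕ → Ω → ℝ) (t u v : ℕ) (ω : Ω)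
    (hv : v ∈ Finset.Icc t u) : L v ω ≤ runMax L t u ω := by
  rw [runMax]; exact (Finset.le_fold_max _).mpr (Or.inr ⟨v, hv, le_rfl⟩)

lemma runMax_le (L : ℕ → Ω → ℝ) {t u : ℕ} (htu : t ≤ u) {ω : Ω} {c : ℝ}
    (h : ∀ v ∈ Finset.Icc t u, L v ω ≤ c) : runMax L t u ω ≤ c := by
  rw [runMax]
  exact (Finset.fold_max_le _).mpr ⟨h t (Finset.mem_Icc.mpr ⟨le_rfl, htu⟩), h⟩

lemma runMax_sm {mΩ : MeasurableSpace Ω} (L : ℕ → Ω → ℝ) (s : Finset ℕ)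
    (b : Ω → ℝ) (hb : StronglyMeasurable[mΩ] b)
    (hs : ∀ v ∈ s, StronglyMeasurable[mΩ] (L v)) :
    StronglyMeasurable[mΩ] fun ω => s.fold max (b ω) fun v => L v ω := by
  induction s using Finset.cons_induction with
  | empty => simpa using hb
  | cons a s ha ih =>
    simp only [Finset.fold_cons]
    exact (hs a (Finset.mem_cons_self a s)).sup
      (ih fun v hv => hs v (Finset.mem_cons_of_mem hv))

/-- The level-crossing comparison of payoffs, pointwise. -/
lemma payoff_le (L : ℕ → Ω → ℝ) (N : ℕ) (ω : Ω) (σ τ : ℕ) (hσN : σ ≤ N) (hτN : τ ≤ N)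
    (hneg : ∀ v, v < σ → L v ω ≤ 0) (hpos : σ < N → 0 < L σ ω) :
    ∑ u ∈ Finset.Ico τ N, runMax L τ u ω ≤ ∑ u ∈ Finset.Ico σ N, runMax L σ u ω := by
  rcases le_or_gt σ τ with hστ | hτσ
  · calc ∑ u ∈ Finset.Ico τ N, runMax L τ u ω
        ≤ ∑ u ∈ Finset.Ico τ N, runMax L σ u ω := by
          refine Finset.sum_le_sum fun u hu => ?_
          have hu' := Finset.mem_Ico.mp hu
          refine runMax_le L hu'.1 fun v hv => ?_
          have hv' := Finset.mem_Icc.mp hv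
          exact le_runMax L σ u v ω (Finset.mem_Icc.mpr ⟨le_trans hστ hv'.1, hv'.2⟩)
      _ ≤ ∑ u ∈ Finset.Ico σ N, runMax L σ u ω := by
          refine Finset.sum_le_sum_of_subset_of_nonneg
            (Finset.Ico_subset_Ico hστ le_rfl) fun u hu _ => ?_
          have hu' := Finset.mem_Ico.mp hu
          have hσN' : σ < N := lt_of_le_of_lt hu'.1 hu'.2
          exact le_trans (hpos hσN').le
            (le_runMax L σ u σ ω (Finset.mem_Icc.mpr ⟨le_rfl, hu'.1⟩))
  · rw [← Finset.sum_Ico_consecutive (fun u => runMax L τ u ω) hτσ.le hσN]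
    have h1 : ∑ u ∈ Finset.Ico τ σ, runMax L τ u ω ≤ 0 := by
      refine Finset.sum_nonpos fun u hu => ?_
      have hu' := Finset.mem_Ico.mp hu
      exact runMax_le L hu'.1 fun v hv =>
        hneg v (lt_of_le_of_lt (Finset.mem_Icc.mp hv).2 hu'.2)
    have h2 : ∑ u ∈ Finset.Ico σ N, runMax L τ u ω
        ≤ ∑ u ∈ Finset.Ico σ N, runMax L σ u ω := by
      refine Finset.sum_le_sum fun u hu => ?_
      have hu' := Finset.mem_Ico.mp hu
      have hσN' : σ < N := lt_of_le_of_lt hu'.1 hu'.2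
      refine runMax_le L (le_trans hτσ.le hu'.1) fun v hv => ?_
      have hv' := Finset.mem_Icc.mp hv
      rcases lt_or_ge v σ with h | h
      · exact le_trans (hneg v h) (le_trans (hpos hσN').le
          (le_runMax L σ u σ ω (Finset.mem_Icc.mpr ⟨le_rfl, hu'.1⟩)))
      · exact le_runMax L σ u v ω (Finset.mem_Icc.mpr ⟨h, hv'.2⟩)
    linarith

lemma comp_repr (N : ℕ) (f : ℕ → Ω → ℝ) (σ : Ω → ℕ) (hσ : ∀ ω, σ ω ≤ N) :
    (fun ω => f (σ ω) ω) =
      fun ω => ∑ s ∈ Finset.range (N + 1), ({ω' | σ ω' = s}.indicator (f s)) ω := by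
  funext ω
  symm
  rw [Finset.sum_eq_single_of_mem (σ ω)
    (Finset.mem_range.mpr (Nat.lt_succ_of_le (hσ ω)))
    (fun s _ hs => Set.indicator_of_notMem
      (by simp only [Set.mem_setOf_eq]; exact fun h => hs h.symm) _)]
  exact Set.indicator_of_mem (show ω ∈ {ω' | σ ω' = σ ω} from rfl) (f (σ ω))

lemma comp_sm {m0 : MeasurableSpace Ω} (F : Filtration ℕ m0) (N : ℕ)
    (f : ℕ → Ω → ℝ) (hf : ∀ s, s ≤ N → StronglyMeasurable[F N] (f s))
    (σ : Ω → ℕ) (hst : IsStoppingTime F (fun ω => (σ ω : WithTop ℕ))) (hσ : ∀ ω, σ ω ≤ N) :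
    StronglyMeasurable[F N] fun ω => f (σ ω) ω := by
  rw [comp_repr N f σ hσ]
  refine Finset.stronglyMeasurable_fun_sum _ fun s hs => ?_
  have hsN : s ≤ N := Nat.lt_succ_iff.mp (Finset.mem_range.mp hs)
  exact (hf s hsN).indicator (F.mono hsN _ (by simpa using hst.measurableSet_eq_of_countable s))

lemma comp_memLp {m0 : MeasurableSpace Ω} (μ : Measure Ω) (F : Filtration ℕ m0) (N : ℕ)
    (f : ℕ → Ω → ℝ) (hf : ∀ s, s ≤ N → MemLp (f s) 2 μ)
    (σ : Ω → ℕ) (hst : IsStoppingTime F (fun ω => (σ ω : WithTop ℕ))) (hσ : ∀ ω, σ ω ≤ N) :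
    MemLp (fun ω => f (σ ω) ω) 2 μ := by
  rw [comp_repr N f σ hσ]
  refine memLp_finsetSum _ fun s hs => ?_
  have hsN : s ≤ N := Nat.lt_succ_iff.mp (Finset.mem_range.mp hs)
  exact (hf s hsN).indicator (F.le s _ (by simpa using hst.measurableSet_eq_of_countable s))

end AuxLemmas

namespace NLExp

variable {Ω : Type*} {m0 : MeasurableSpace Ω} {μ : Measure Ω} {F : Filtration ℕ m0}
  {N : ℕ} (EE : NLExp μ F N)

lemma congr_ae {t : ℕ} (ht : t ≤ N) {ξ η : Ω → ℝ} (hξm : StronglyMeasurable[F N] ξ)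
    (hξp : MemLp ξ 2 μ) (hηm : StronglyMeasurable[F N] η) (hηp : MemLp η 2 μ)
    (h : ξ =ᵐ[μ] η) : EE.E t ξ =ᵐ[μ] EE.E t η :=
  (EE.mono t ht ξ η hξm hξp hηm hηp h.le).antisymm
    (EE.mono t ht η ξ hηm hηp hξm hξp h.symm.le)

lemma zero_ae {t : ℕ} (ht : t ≤ N) : EE.E t 0 =ᵐ[μ] 0 := by
  have h0m : StronglyMeasurable[F N] (0 : Ω → ℝ) := stronglyMeasurable_const
  have h0p : MemLp (0 : Ω → ℝ) 2 μ := MemLp.zero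
  have hEm : StronglyMeasurable[F t] (EE.E t 0) := EE.adapted t ht 0 h0m h0p
  have hEp : MemLp (EE.E t 0) 2 μ := EE.sqInt t ht 0 h0m h0p
  have htr := EE.translation t ht 0 (EE.E t 0) h0m h0p hEm hEp
  rw [zero_add] at htr
  have htw := EE.tower t t le_rfl ht 0 h0m h0p
  filter_upwards [htr, htw] with ω h1 h2
  simp only [Pi.add_apply] at h1
  have : EE.E t 0 ω = 0 := by
    have := h2.symm.trans h1; linarith
  simpa using this

lemma eq_self_ae {t : ℕ} (ht : t ≤ N) {ζ : Ω → ℝ} (hζt : StronglyMeasurable[F t] ζ)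
    (hζp : MemLp ζ 2 μ) : EE.E t ζ =ᵐ[μ] ζ := by
  have h0m : StronglyMeasurable[F N] (0 : Ω → ℝ) := stronglyMeasurable_const
  have h0p : MemLp (0 : Ω → ℝ) 2 μ := MemLp.zero
  have htr := EE.translation t ht 0 ζ h0m h0p hζt hζp
  rw [zero_add] at htr
  filter_upwards [htr, EE.zero_ae ht] with ω h1 h2
  simp only [Pi.add_apply] at h1
  simp only [Pi.zero_apply] at h2
  rw [h1, h2, zero_add]

/-- The key induction: for a stopping time `τ ≤ N`, the value `E t [X_{τ ∨ t}]`
coincides with `E t [G_{τ ∨ t}]` where `G` is the representing payoff process. -/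
lemma keyA (X G : ℕ → Ω → ℝ)
    (hXad : ∀ s, s ≤ N → StronglyMeasurable[F s] (X s))
    (hXp : ∀ s, s ≤ N → MemLp (X s) 2 μ)
    (hGm : ∀ s, s ≤ N → StronglyMeasurable[F N] (G s))
    (hGp : ∀ s, s ≤ N → MemLp (G s) 2 μ)
    (hGN : G N = X N)
    (hrep : ∀ t, t < N → X t =ᵐ[μ] EE.E t (G t))
    (τ : Ω → ℕ) (hτ : IsStoppingTime F (fun ω => (τ ω : WithTop ℕ))) (hτN : ∀ ω, τ ω ≤ N) :
    ∀ d t, t + d = N →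
      EE.E t (fun ω => X (τ ω ⊔ t) ω) =ᵐ[μ] EE.E t (fun ω => G (τ ω ⊔ t) ω) := by
  have hXm : ∀ s, s ≤ N → StronglyMeasurable[F N] (X s) :=
    fun s hs => (hXad s hs).mono (F.mono hs)
  intro d
  induction d with
  | zero =>
    intro t ht
    have htN : t = N := by omega
    have h1 : (fun ω => X (τ ω ⊔ t) ω) = X N := by
      funext ω; rw [htN, sup_eq_right.mpr (hτN ω)]
    have h2 : (fun ω => G (τ ω ⊔ t) ω) = G N := by
      funext ω; rw [htN, sup_eq_right.mpr (hτN ω)]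
    rw [h1, h2, hGN]
  | succ d ih =>
    intro t ht
    have htN : t < N := by omega
    have ht1 : t + 1 ≤ N := htN
    have hσst : IsStoppingTime F (fun ω => ((τ ω ⊔ (t + 1) : ℕ) : WithTop ℕ)) := by
        intro i
        have h := hτ.max_const (t + 1) i
        convert h using 1
        ext ω; simp
        intro _; exact_mod_cast Nat.lt_iff_add_one_le
    have hσN : ∀ ω, τ ω ⊔ (t + 1) ≤ N := fun ω => sup_le (hτN ω) ht1
    set A : Set Ω := {ω | τ ω ≤ t} with hA
    have hAmeas : MeasurableSet[F t] A := by simpa [hA] using hτ.measurableSet_le t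
    have hdec : ∀ f : ℕ → Ω → ℝ, (fun ω => f (τ ω ⊔ t) ω)
        = A.indicator (f t) + Aᶜ.indicator (fun ω => f (τ ω ⊔ (t + 1)) ω) := by
      intro f; funext ω
      by_cases h : τ ω ≤ t
      · have h1 : τ ω ⊔ t = t := sup_eq_right.mpr h
        simp [hA, Set.indicator_apply, Set.mem_setOf_eq, h, h1]
      · have h1 : τ ω ⊔ t = τ ω := sup_eq_left.mpr (not_le.mp h).le
        have h3 : τ ω ⊔ (t + 1) = τ ω := sup_eq_left.mpr (not_le.mp h)
        simp [hA, Set.indicator_apply, Set.mem_setOf_eq, h, h1, h3]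
    have hXσm : StronglyMeasurable[F N] (fun ω => X (τ ω ⊔ (t + 1)) ω) :=
      comp_sm F N X hXm _ hσst hσN
    have hXσp : MemLp (fun ω => X (τ ω ⊔ (t + 1)) ω) 2 μ :=
      comp_memLp μ F N X hXp _ hσst hσN
    have hGσm : StronglyMeasurable[F N] (fun ω => G (τ ω ⊔ (t + 1)) ω) :=
      comp_sm F N G hGm _ hσst hσN
    have hGσp : MemLp (fun ω => G (τ ω ⊔ (t + 1)) ω) 2 μ :=
      comp_memLp μ F N G hGp _ hσst hσN
    have hz1 := EE.zeroOne t htN.le (X t) _ (hXm t htN.le) (hXp t htN.le) hXσm hXσp A hAmeas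
    have hz2 := EE.zeroOne t htN.le (G t) _ (hGm t htN.le) (hGp t htN.le) hGσm hGσp A hAmeas
    have hEt : EE.E t (X t) =ᵐ[μ] EE.E t (G t) :=
      (EE.eq_self_ae htN.le (hXad t htN.le) (hXp t htN.le)).trans (hrep t htN)
    have hEτ : EE.E t (fun ω => X (τ ω ⊔ (t + 1)) ω)
        =ᵐ[μ] EE.E t (fun ω => G (τ ω ⊔ (t + 1)) ω) := by
      have hIH := ih (t + 1) (by omega)
      have h1 := EE.tower t (t + 1) (by omega) ht1 _ hXσm hXσp
      have h2 := EE.tower t (t + 1) (by omega) ht1 _ hGσm hGσp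
      have h3 : EE.E t (EE.E (t + 1) (fun ω => X (τ ω ⊔ (t + 1)) ω)) =ᵐ[μ]
          EE.E t (EE.E (t + 1) (fun ω => G (τ ω ⊔ (t + 1)) ω)) := by
        refine EE.congr_ae htN.le ?_ ?_ ?_ ?_ hIH
        · exact (EE.adapted (t + 1) ht1 _ hXσm hXσp).mono (F.mono ht1)
        · exact EE.sqInt (t + 1) ht1 _ hXσm hXσp
        · exact (EE.adapted (t + 1) ht1 _ hGσm hGσp).mono (F.mono ht1)
        · exact EE.sqInt (t + 1) ht1 _ hGσm hGσp
      exact h1.symm.trans (h3.trans h2)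
    calc EE.E t (fun ω => X (τ ω ⊔ t) ω)
        = EE.E t (A.indicator (X t) + Aᶜ.indicator (fun ω => X (τ ω ⊔ (t + 1)) ω)) := by
          rw [hdec X]
      _ =ᵐ[μ] A.indicator (EE.E t (X t))
            + Aᶜ.indicator (EE.E t (fun ω => X (τ ω ⊔ (t + 1)) ω)) := hz1
      _ =ᵐ[μ] A.indicator (EE.E t (G t))
            + Aᶜ.indicator (EE.E t (fun ω => G (τ ω ⊔ (t + 1)) ω)) := by
          filter_upwards [hEt, hEτ] with ω e1 e2
          simp only [Pi.add_apply, Set.indicator_apply]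
          split_ifs <;> simp [e1, e2]
      _ =ᵐ[μ] EE.E t (A.indicator (G t) + Aᶜ.indicator (fun ω => G (τ ω ⊔ (t + 1)) ω)) :=
          hz2.symm
      _ = EE.E t (fun ω => G (τ ω ⊔ t) ω) := by rw [← hdec G]

end NLExp

/-- **Level-crossing principle, upper level-passage time.** The stopping time
`τ̄ := min{ v ∈ {0,...,N-1} : L_v > 0 } ∧ N` is optimal for the optimal stopping
problem under the nonlinear expectation: `E 0 [X_τ] ≤ E 0 [X_τ̄]` a.s. for every
stopping time `τ ∈ T_{0,N}`. -/
theorem level_crossing_upper_passage_time_optimal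
{Ω : Type*} [TopologicalSpace Ω] [PolishSpace Ω]
    [m0 : MeasurableSpace Ω] [BorelSpace Ω]
    (μ : Measure Ω) [IsProbabilityMeasure μ]
    (F : Filtration ℕ m0) (N : ℕ) (hN : 1 ≤ N)
    (EE : NLExp μ F N)
(X : ℕ → Ω → ℝ)
    (hX_adapted : ∀ t, t ≤ N → StronglyMeasurable[F t] (X t))
    (hX_sqInt : ∀ t, t ≤ N → MemLp (X t) 2 μ)
(L : ℕ → Ω → ℝ)
    (hL_adapted : ∀ t, t < N → StronglyMeasurable[F t] (L t))
    (hL_sqInt : ∀ t, t < N →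
      MemLp (fun ω => ∑ u ∈ Finset.Ico t N, runMax L t u ω) 2 μ)
    (hL_rep : ∀ t, t < N →
      X t =ᵐ[μ] EE.E t fun ω => (∑ u ∈ Finset.Ico t N, runMax L t u ω) + X N ω)
    (τbar : Ω → ℕ)
    (hτbar_def : ∀ ω, τbar ω = sInf ({v | v < N ∧ 0 < L v ω} ∪ {N})) :
    IsStoppingTime F (fun ω => (τbar ω : WithTop ℕ)) ∧ (∀ ω, τbar ω ≤ N) ∧
    ∀ τ : Ω → ℕ, IsStoppingTime F (fun ω => (τ ω : WithTop ℕ)) → (∀ ω, τ ω ≤ N) →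
      EE.E 0 (fun ω => X (τ ω) ω) ≤ᵐ[μ] EE.E 0 fun ω => X (τbar ω) ω := by
  -- basic facts about τbar
  have hτbarN : ∀ ω, τbar ω ≤ N := by
    intro ω; rw [hτbar_def ω]; exact Nat.sInf_le (by simp)
  have hτbar_mem : ∀ ω, τbar ω ∈ ({v | v < N ∧ 0 < L v ω} ∪ {N} : Set ℕ) := by
    intro ω; rw [hτbar_def ω]; exact Nat.sInf_mem ⟨N, by simp⟩
  have hτbar_pos : ∀ ω, τbar ω < N → 0 < L (τbar ω) ω := by
    intro ω h
    rcases hτbar_mem ω with hm | hm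
    · exact hm.2
    · simp only [Set.mem_singleton_iff] at hm; omega
  have hτbar_neg : ∀ ω, ∀ v, v < τbar ω → L v ω ≤ 0 := by
    intro ω v hv
    have hnot : v ∉ ({v | v < N ∧ 0 < L v ω} ∪ {N} : Set ℕ) := by
      rw [hτbar_def ω] at hv
      exact Nat.notMem_of_lt_sInf hv
    have hvN : v < N := lt_of_lt_of_le hv (hτbarN ω)
    simp only [Set.mem_union, Set.mem_setOf_eq, Set.mem_singleton_iff, not_or] at hnot
    by_contra hL
    exact hnot.1 ⟨hvN, lt_of_not_ge hL⟩
  -- τbar is a stopping time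
  have hτbar_st : IsStoppingTime F (fun ω => (τbar ω : WithTop ℕ)) := by
    intro t
    have hc : {ω | (τbar ω : WithTop ℕ) ≤ t} = {ω | τbar ω ≤ t} := by ext; simp
    change MeasurableSet[F t] {ω | (τbar ω : WithTop ℕ) ≤ t}
    rw [hc]
    have hiff : ∀ ω, τbar ω ≤ t ↔ ∃ v, v ≤ t ∧ ((v < N ∧ 0 < L v ω) ∨ v = N) := by
      intro ω
      constructor
      · intro h
        refine ⟨τbar ω, h, ?_⟩
        rcases hτbar_mem ω with hm | hm
        · exact Or.inl hm
        · exact Or.inr (by simpa using hm)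
      · rintro ⟨v, hvt, hv⟩
        refine le_trans ?_ hvt
        rw [hτbar_def ω]
        refine Nat.sInf_le ?_
        rcases hv with h | h
        · exact Or.inl h
        · exact Or.inr (by simp [h])
    have hset : {ω | τbar ω ≤ t}
        = ⋃ v ∈ Finset.range (t + 1), {ω | (v < N ∧ 0 < L v ω) ∨ v = N} := by
      ext ω
      simp only [Set.mem_setOf_eq, Set.mem_iUnion, Finset.mem_range, Nat.lt_succ_iff,
        exists_prop]
      rw [hiff ω]
    rw [hset]
    refine Finset.measurableSet_biUnion _ fun v hv => ?_
    have hvt : v ≤ t := Nat.lt_succ_iff.mp (Finset.mem_range.mp hv)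
    by_cases hvN : v < N
    · have : {ω | (v < N ∧ 0 < L v ω) ∨ v = N} = {ω | 0 < L v ω} ∪ {ω | v = N} := by
        ext ω; simp [hvN]
      rw [this]
      refine MeasurableSet.union ?_ ?_
      · have : {ω | 0 < L v ω} = L v ⁻¹' Set.Ioi 0 := rfl
        rw [this]
        exact F.mono hvt _ ((hL_adapted v hvN).measurable measurableSet_Ioi)
      · by_cases h : v = N
        · simp [h]
        · simp [h]
    · by_cases h : v = N
      · have : {ω | (v < N ∧ 0 < L v ω) ∨ v = N} = Set.univ := by
          ext ω; simp [h]
        rw [this]; exact @MeasurableSet.univ _ (F t)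
      · have : {ω | (v < N ∧ 0 < L v ω) ∨ v = N} = (∅ : Set Ω) := by
          ext ω; simp [hvN, h]
        rw [this]; exact @MeasurableSet.empty _ (F t)
  refine ⟨hτbar_st, hτbarN, ?_⟩
  intro τ hτst hτle
  -- the payoff process G
  have hLm : ∀ v, v < N → StronglyMeasurable[F N] (L v) :=
    fun v hv => (hL_adapted v hv).mono (F.mono hv.le)
  have hGm : ∀ s, s ≤ N → StronglyMeasurable[F N]
      (fun ω => (∑ u ∈ Finset.Ico s N, runMax L s u ω) + X N ω) := by
    intro s hs
    refine StronglyMeasurable.add ?_ ((hX_adapted N le_rfl).mono le_rfl)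
    refine Finset.stronglyMeasurable_fun_sum _ fun u hu => ?_
    have hu' := Finset.mem_Ico.mp hu
    exact runMax_sm L _ _ (hLm s (lt_of_le_of_lt hu'.1 hu'.2)) fun v hv =>
      hLm v (lt_of_le_of_lt (Finset.mem_Icc.mp hv).2 hu'.2)
  have hGp : ∀ s, s ≤ N → MemLp
      (fun ω => (∑ u ∈ Finset.Ico s N, runMax L s u ω) + X N ω) 2 μ := by
    intro s hs
    rcases lt_or_eq_of_le hs with h | h
    · exact (hL_sqInt s h).add (hX_sqInt N le_rfl)
    · rw [h]
      simpa [Finset.Ico_self] using hX_sqInt N le_rfl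
  have hGN : (fun ω => (∑ u ∈ Finset.Ico N N, runMax L N u ω) + X N ω) = X N := by
    funext ω; simp [Finset.Ico_self]
  have hA1 := EE.keyA X (fun s ω => (∑ u ∈ Finset.Ico s N, runMax L s u ω) + X N ω)
    hX_adapted hX_sqInt hGm hGp hGN hL_rep τ hτst hτle N 0 (by omega)
  have hA2 := EE.keyA X (fun s ω => (∑ u ∈ Finset.Ico s N, runMax L s u ω) + X N ω)
    hX_adapted hX_sqInt hGm hGp hGN hL_rep τbar hτbar_st hτbarN N 0 (by omega)
  have h0 : ∀ σ : Ω → ℕ, ∀ ω : Ω, σ ω ⊔ 0 = σ ω :=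
    fun σ ω => sup_eq_left.mpr (Nat.zero_le _)
  simp only [h0 τ] at hA1
  simp only [h0 τbar] at hA2
  -- pointwise comparison of payoffs
  have hpt : (fun ω => (∑ u ∈ Finset.Ico (τ ω) N, runMax L (τ ω) u ω) + X N ω)
      ≤ᵐ[μ] fun ω => (∑ u ∈ Finset.Ico (τbar ω) N, runMax L (τbar ω) u ω) + X N ω := by
    refine Filter.Eventually.of_forall fun ω => ?_
    exact add_le_add_left
      (payoff_le L N ω (τbar ω) (τ ω) (hτbarN ω) (hτle ω)
        (hτbar_neg ω) (hτbar_pos ω)) _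
  have hmono := EE.mono 0 (Nat.zero_le N)
    (fun ω => (∑ u ∈ Finset.Ico (τ ω) N, runMax L (τ ω) u ω) + X N ω)
    (fun ω => (∑ u ∈ Finset.Ico (τbar ω) N, runMax L (τbar ω) u ω) + X N ω)
    (comp_sm F N _ hGm τ hτst hτle)
    (comp_memLp μ F N _ hGp τ hτst hτle)
    (comp_sm F N _ hGm τbar hτbar_st hτbarN)
    (comp_memLp μ F N _ hGp τbar hτbar_st hτbarN)
    hpt
  filter_upwards [hA1, hmono, hA2] with ω e1 e2 e3
  rw [e1, e3]
  exact e2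
end

section
/- Level-crossing principle, lower level-passage time: define the stopping time τ̲ := min{ v ∈ {0,...,N-1} : L_v ≥ 0 } ∧ N. Then τ̲ is optimal for the optimal stopping problem under the nonlinear expectation, i.e., for every stopping time τ ∈ T_{0,N}, E_0[X_τ] ≤ E_0[X_{τ̲}] a.s. -/
open MeasureTheory Filter

namespace LCPAux

variable {Ω : Type*} {m0 : MeasurableSpace Ω} {μ : Measure Ω} {F : Filtration ℕ m0} {N : ℕ}


variable {Ω : Type*}

lemma runMax_le {L : ℕ → Ω → ℝ} {t u : ℕ} {ω : Ω} {c : ℝ}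
    (h0 : L t ω ≤ c) (h : ∀ v ∈ Finset.Icc t u, L v ω ≤ c) :
    runMax L t u ω ≤ c :=
  (Finset.fold_max_le _).2 ⟨h0, h⟩

lemma le_runMax {L : ℕ → Ω → ℝ} {t u v : ℕ} (hv : v ∈ Finset.Icc t u) (ω : Ω) :
    L v ω ≤ runMax L t u ω :=
  (Finset.le_fold_max _).2 (Or.inr ⟨v, hv, le_rfl⟩)

lemma left_le_runMax (L : ℕ → Ω → ℝ) (t u : ℕ) (ω : Ω) :
    L t ω ≤ runMax L t u ω :=
  (Finset.le_fold_max _).2 (Or.inl le_rfl)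

/-- Pointwise comparison: the running-max tail sum started anywhere is dominated by the
one started at the first crossing time `s`. -/
lemma sumRunMax_le (L : ℕ → Ω → ℝ) (ω : Ω) {N s : ℕ} (hsN : s ≤ N)
    (hneg : ∀ v, v < s → L v ω < 0) (hpos : s < N → 0 ≤ L s ω)
    {t : ℕ} (ht : t ≤ N) :
    ∑ u ∈ Finset.Ico t N, runMax L t u ω ≤ ∑ u ∈ Finset.Ico s N, runMax L s u ω := by
  rcases le_or_gt t s with hts | hst
  · -- t ≤ s
    rw [← Finset.sum_Ico_consecutive (fun u => runMax L t u ω) hts hsN]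
    have h1 : ∑ u ∈ Finset.Ico t s, runMax L t u ω ≤ 0 := by
      apply Finset.sum_nonpos
      intro u hu
      rw [Finset.mem_Ico] at hu
      apply runMax_le (le_of_lt (hneg t (lt_of_le_of_lt hu.1 hu.2)))
      intro v hv
      rw [Finset.mem_Icc] at hv
      exact le_of_lt (hneg v (lt_of_le_of_lt hv.2 hu.2))
    have h2 : ∑ u ∈ Finset.Ico s N, runMax L t u ω ≤
        ∑ u ∈ Finset.Ico s N, runMax L s u ω := by
      apply Finset.sum_le_sum
      intro u hu
      rw [Finset.mem_Ico] at hu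
      have hsN' : s < N := lt_of_le_of_lt hu.1 hu.2
      have hLs : 0 ≤ L s ω := hpos hsN'
      have hsle : L s ω ≤ runMax L s u ω :=
        le_runMax (Finset.mem_Icc.2 ⟨le_rfl, hu.1⟩) ω
      apply runMax_le
      · rcases lt_or_ge t s with h | h
        · exact le_trans (le_of_lt (hneg t h)) (le_trans hLs hsle)
        · have : t = s := le_antisymm hts h
          rw [this]; exact hsle
      · intro v hv
        rw [Finset.mem_Icc] at hv
        rcases lt_or_ge v s with h | h
        · exact le_trans (le_of_lt (hneg v h)) (le_trans hLs hsle)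
        · exact le_runMax (Finset.mem_Icc.2 ⟨h, hv.2⟩) ω
    linarith
  · -- s < t
    have hsN' : s < N := lt_of_lt_of_le hst ht
    have hLs : 0 ≤ L s ω := hpos hsN'
    rw [← Finset.sum_Ico_consecutive (fun u => runMax L s u ω) (le_of_lt hst) ht]
    have h1 : (0:ℝ) ≤ ∑ u ∈ Finset.Ico s t, runMax L s u ω := by
      apply Finset.sum_nonneg
      intro u hu
      rw [Finset.mem_Ico] at hu
      exact le_trans hLs (left_le_runMax L s u ω)
    have h2 : ∑ u ∈ Finset.Ico t N, runMax L t u ω ≤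
        ∑ u ∈ Finset.Ico t N, runMax L s u ω := by
      apply Finset.sum_le_sum
      intro u hu
      rw [Finset.mem_Ico] at hu
      apply runMax_le
      · exact le_runMax (Finset.mem_Icc.2 ⟨le_of_lt hst, hu.1⟩) ω
      · intro v hv
        rw [Finset.mem_Icc] at hv
        exact le_runMax (Finset.mem_Icc.2 ⟨le_trans (le_of_lt hst) hv.1, hv.2⟩) ω
    linarith

lemma stronglyMeasurable_fold_max {m : MeasurableSpace Ω} (s : Finset ℕ)
    (g : ℕ → Ω → ℝ) (b : Ω → ℝ) (hb : StronglyMeasurable[m] b)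
    (hg : ∀ v ∈ s, StronglyMeasurable[m] (g v)) :
    StronglyMeasurable[m] (fun ω => s.fold max (b ω) fun v => g v ω) := by
  classical
  induction s using Finset.induction with
  | empty => simpa using hb
  | @insert a s ha ih =>
    have : (fun ω => (insert a s).fold max (b ω) fun v => g v ω)
        = fun ω => max (g a ω) (s.fold max (b ω) fun v => g v ω) := by
      funext ω; rw [Finset.fold_insert ha]
    rw [this]
    exact (hg a (Finset.mem_insert_self a s)).sup
      (ih fun v hv => hg v (Finset.mem_insert_of_mem hv))



variable {Ω : Type*} {m0 : MeasurableSpace Ω} {μ : Measure Ω} {F : Filtration ℕ m0} {N : ℕ}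

lemma NLExp_zero (EE : NLExp μ F N) {t : ℕ} (ht : t ≤ N) : EE.E t 0 =ᵐ[μ] 0 := by
  have sm0 : StronglyMeasurable[F N] (0 : Ω → ℝ) := stronglyMeasurable_const
  have l20 : MemLp (0 : Ω → ℝ) 2 μ := MemLp.zero
  have smE : StronglyMeasurable[F t] (EE.E t 0) := EE.adapted t ht 0 sm0 l20
  have l2E : MemLp (EE.E t 0) 2 μ := EE.sqInt t ht 0 sm0 l20
  have h1 := EE.translation t ht 0 (EE.E t 0) sm0 l20 smE l2E
  have h2 := EE.tower t t le_rfl ht 0 sm0 l20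
  rw [show (0 : Ω → ℝ) + EE.E t 0 = EE.E t 0 from by funext ω; simp] at h1
  filter_upwards [h1, h2] with ω hω1 hω2
  have : EE.E t 0 ω + EE.E t 0 ω = EE.E t 0 ω := by
    rw [← Pi.add_apply (EE.E t 0) (EE.E t 0), ← hω1, hω2]
  simpa using by linarith

lemma NLExp_id (EE : NLExp μ F N) {t : ℕ} (ht : t ≤ N) {ζ : Ω → ℝ}
    (hζt : StronglyMeasurable[F t] ζ) (hζ2 : MemLp ζ 2 μ) : EE.E t ζ =ᵐ[μ] ζ := by
  have sm0 : StronglyMeasurable[F N] (0 : Ω → ℝ) := stronglyMeasurable_const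
  have l20 : MemLp (0 : Ω → ℝ) 2 μ := MemLp.zero
  have h := EE.translation t ht 0 ζ sm0 l20 hζt hζ2
  rw [show (0 : Ω → ℝ) + ζ = ζ from by funext ω; simp] at h
  filter_upwards [h, NLExp_zero EE ht] with ω hω1 hω2
  rw [hω1]
  simpa using hω2

lemma NLExp_congr (EE : NLExp μ F N) {t : ℕ} (ht : t ≤ N) {ξ η : Ω → ℝ}
    (hξ : StronglyMeasurable[F N] ξ) (hξ2 : MemLp ξ 2 μ)
    (hη : StronglyMeasurable[F N] η) (hη2 : MemLp η 2 μ)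
    (h : ξ =ᵐ[μ] η) : EE.E t ξ =ᵐ[μ] EE.E t η :=
  (EE.mono t ht ξ η hξ hξ2 hη hη2 h.le).antisymm
    (EE.mono t ht η ξ hη hη2 hξ hξ2 h.symm.le)

lemma assemble_repr (σ : Ω → ℕ) (hσN : ∀ ω, σ ω ≤ N) (g : ℕ → Ω → ℝ) :
    (fun ω => g (σ ω) ω)
      = fun ω => ∑ t ∈ Finset.range (N + 1), Set.indicator {x | σ x = t} (g t) ω := by
  funext ω
  rw [Finset.sum_eq_single (σ ω)]
  · exact (Set.indicator_of_mem (by simp : ω ∈ {x | σ x = σ ω}) _).symm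
  · intro t _ hne
    exact Set.indicator_of_notMem (by simpa using fun h => hne h.symm) _
  · intro h
    exact absurd (Finset.mem_range.2 (Nat.lt_succ_of_le (hσN ω))) h

lemma assemble_sm {σ : Ω → ℕ} (hσ : IsStoppingTime F (fun ω => (σ ω : WithTop ℕ))) (hσN : ∀ ω, σ ω ≤ N)
    {g : ℕ → Ω → ℝ} (hg : ∀ t, t ≤ N → StronglyMeasurable[F N] (g t)) :
    StronglyMeasurable[F N] (fun ω => g (σ ω) ω) := by
  rw [assemble_repr σ hσN g]
  apply Finset.stronglyMeasurable_fun_sum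
  intro t htm
  have ht : t ≤ N := Nat.lt_succ_iff.1 (Finset.mem_range.1 htm)
  exact (hg t ht).indicator (F.mono ht _ (by simpa using hσ.measurableSet_eq t))

lemma assemble_l2 {σ : Ω → ℕ} (hσ : IsStoppingTime F (fun ω => (σ ω : WithTop ℕ))) (hσN : ∀ ω, σ ω ≤ N)
    {g : ℕ → Ω → ℝ} (hg : ∀ t, t ≤ N → MemLp (g t) 2 μ) :
    MemLp (fun ω => g (σ ω) ω) 2 μ := by
  rw [assemble_repr σ hσN g]
  have h : ∀ t ∈ Finset.range (N + 1),
      MemLp (Set.indicator {x | σ x = t} (g t)) 2 μ := by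
    intro t htm
    have ht : t ≤ N := Nat.lt_succ_iff.1 (Finset.mem_range.1 htm)
    exact (hg t ht).indicator (F.le t _ (by simpa using hσ.measurableSet_eq t))
  have h2 := memLp_finset_sum' (Finset.range (N + 1)) h
  have heq : (∑ i ∈ Finset.range (N + 1), Set.indicator {x | σ x = i} (g i))
      = fun ω => ∑ t ∈ Finset.range (N + 1), Set.indicator {x | σ x = t} (g t) ω := by
    funext ω; simp
  rwa [heq] at h2

/-- Generalized optional-sampling identity for the representation `X t = E t (Ξ t)`. -/
lemma key_identity (EE : NLExp μ F N) (X Ξ : ℕ → Ω → ℝ)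
    (hXt : ∀ t, t ≤ N → StronglyMeasurable[F t] (X t))
    (hX2 : ∀ t, t ≤ N → MemLp (X t) 2 μ)
    (hΞsm : ∀ t, t ≤ N → StronglyMeasurable[F N] (Ξ t))
    (hΞ2 : ∀ t, t ≤ N → MemLp (Ξ t) 2 μ)
    (hrep : ∀ t, t ≤ N → EE.E t (Ξ t) =ᵐ[μ] X t)
    (σ : Ω → ℕ) (hσ : IsStoppingTime F (fun ω => (σ ω : WithTop ℕ))) (hσN : ∀ ω, σ ω ≤ N) :
    EE.E 0 (fun ω => X (σ ω) ω) =ᵐ[μ] EE.E 0 (fun ω => Ξ (σ ω) ω) := by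
  have hXsm : ∀ t, t ≤ N → StronglyMeasurable[F N] (X t) :=
    fun t ht => (hXt t ht).mono (F.mono ht)
  set R : ℕ → Ω → ℝ := fun t ω => if σ ω < t then Ξ (σ ω) ω else X (σ ω) ω with hR
  have hgsm : ∀ t s, s ≤ N → StronglyMeasurable[F N]
      (fun ω => if s < t then Ξ s ω else X s ω) := by
    intro t s hs
    by_cases h : s < t <;> simp only [h, if_true, if_false] <;>
      [exact hΞsm s hs; exact hXsm s hs]
  have hgl2 : ∀ t s, s ≤ N → MemLp (fun ω => if s < t then Ξ s ω else X s ω) 2 μ := by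
    intro t s hs
    by_cases h : s < t <;> simp only [h, if_true, if_false] <;>
      [exact hΞ2 s hs; exact hX2 s hs]
  have hRsm : ∀ t, StronglyMeasurable[F N] (R t) := fun t =>
    assemble_sm hσ hσN (g := fun s => fun ω => if s < t then Ξ s ω else X s ω) (hgsm t)
  have hRl2 : ∀ t, MemLp (R t) 2 μ := fun t =>
    assemble_l2 hσ hσN (g := fun s => fun ω => if s < t then Ξ s ω else X s ω) (hgl2 t)
  have step : ∀ t, t ≤ N → EE.E t (R (t + 1)) =ᵐ[μ] EE.E t (R t) := by
    intro t ht
    set B : Set Ω := {x | σ x = t} with hBdef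
    have hB : MeasurableSet[F t] B := by rw [hBdef]; simpa using hσ.measurableSet_eq t
    have eq1 : R t = B.indicator (X t) + Bᶜ.indicator (R t) := by
      funext ω
      by_cases hω : σ ω = t
      · have hmem : ω ∈ B := hω
        simp only [Pi.add_apply, Set.indicator_of_mem hmem,
          Set.indicator_of_notMem (Set.notMem_compl_iff.2 hmem)]
        simp [hR, hω]
      · have hmem : ω ∈ Bᶜ := hω
        simp only [Pi.add_apply, Set.indicator_of_mem hmem,
          Set.indicator_of_notMem (by simpa [hBdef] using hω : ω ∉ B)]
        simp
    have eq2 : R (t + 1) = B.indicator (Ξ t) + Bᶜ.indicator (R t) := by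
      funext ω
      by_cases hω : σ ω = t
      · have hmem : ω ∈ B := hω
        simp only [Pi.add_apply, Set.indicator_of_mem hmem,
          Set.indicator_of_notMem (Set.notMem_compl_iff.2 hmem)]
        simp [hR, hω]
      · have hmem : ω ∈ Bᶜ := hω
        simp only [Pi.add_apply, Set.indicator_of_mem hmem,
          Set.indicator_of_notMem (by simpa [hBdef] using hω : ω ∉ B)]
        have : σ ω < t + 1 ↔ σ ω < t := by omega
        simp [hR, this]
    have z1 := EE.zeroOne t ht (X t) (R t) (hXsm t ht) (hX2 t ht) (hRsm t) (hRl2 t) B hB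
    have z2 := EE.zeroOne t ht (Ξ t) (R t) (hΞsm t ht) (hΞ2 t ht) (hRsm t) (hRl2 t) B hB
    rw [← eq1] at z1
    rw [← eq2] at z2
    have hid : EE.E t (X t) =ᵐ[μ] X t := NLExp_id EE ht (hXt t ht) (hX2 t ht)
    filter_upwards [z1, z2, hid, hrep t ht] with ω h1 h2 h3 h4
    rw [h1, h2]
    by_cases hω : ω ∈ B
    · simp only [Pi.add_apply, Set.indicator_of_mem hω,
        Set.indicator_of_notMem (Set.notMem_compl_iff.2 hω), h3, h4]
    · simp only [Pi.add_apply, Set.indicator_of_notMem hω,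
        Set.indicator_of_mem (Set.mem_compl hω)]
  have main : ∀ t, t ≤ N + 1 → EE.E 0 (R t) =ᵐ[μ] EE.E 0 (R 0) := by
    intro t
    induction t with
    | zero => intro _; exact EventuallyEq.rfl
    | succ t ih =>
      intro h
      have ht : t ≤ N := Nat.lt_succ_iff.1 h
      have hsmE : ∀ u, StronglyMeasurable[F N] (EE.E t (R u)) :=
        fun u => (EE.adapted t ht (R u) (hRsm u) (hRl2 u)).mono (F.mono ht)
      have hl2E : ∀ u, MemLp (EE.E t (R u)) 2 μ :=
        fun u => EE.sqInt t ht (R u) (hRsm u) (hRl2 u)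
      have h1 : EE.E 0 (R (t + 1)) =ᵐ[μ] EE.E 0 (EE.E t (R (t + 1))) :=
        (EE.tower 0 t (Nat.zero_le t) ht (R (t + 1)) (hRsm _) (hRl2 _)).symm
      have h2 : EE.E 0 (EE.E t (R (t + 1))) =ᵐ[μ] EE.E 0 (EE.E t (R t)) :=
        NLExp_congr EE (Nat.zero_le N) (hsmE _) (hl2E _) (hsmE _) (hl2E _) (step t ht)
      have h3 : EE.E 0 (EE.E t (R t)) =ᵐ[μ] EE.E 0 (R t) :=
        EE.tower 0 t (Nat.zero_le t) ht (R t) (hRsm _) (hRl2 _)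
      exact h1.trans (h2.trans (h3.trans (ih (le_trans ht (Nat.le_succ N)))))
  have hRN : R (N + 1) = fun ω => Ξ (σ ω) ω := by
    funext ω
    have : σ ω < N + 1 := Nat.lt_succ_of_le (hσN ω)
    simp [hR, this]
  have hR0 : R 0 = fun ω => X (σ ω) ω := by
    funext ω
    simp [hR]
  have := main (N + 1) le_rfl
  rw [hRN, hR0] at this
  exact this.symm

lemma xi_sm {L X : ℕ → Ω → ℝ}
    (hL_adapted : ∀ t, t < N → StronglyMeasurable[F t] (L t))
    (hXN : StronglyMeasurable[F N] (X N)) {s : ℕ} (_hs : s ≤ N) :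
    StronglyMeasurable[F N]
      (fun ω => (∑ u ∈ Finset.Ico s N, runMax L s u ω) + X N ω) := by
  apply StronglyMeasurable.add _ hXN
  apply Finset.stronglyMeasurable_fun_sum
  intro u hu
  rw [Finset.mem_Ico] at hu
  have hsN : s < N := lt_of_le_of_lt hu.1 hu.2
  exact stronglyMeasurable_fold_max (Finset.Icc s u) L (L s)
    ((hL_adapted s hsN).mono (F.mono hsN.le))
    (fun v hv => by
      have hvN : v < N := lt_of_le_of_lt (Finset.mem_Icc.1 hv).2 hu.2
      exact (hL_adapted v hvN).mono (F.mono hvN.le))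


end LCPAux

open LCPAux in
/-- **Level-crossing principle, lower level-passage time.** The stopping time
`τ̲ := min{ v ∈ {0,...,N-1} : L_v ≥ 0 } ∧ N` is optimal for the optimal stopping
problem under the nonlinear expectation: `E 0 [X_τ] ≤ E 0 [X_τ̲]` a.s. for every
stopping time `τ ∈ T_{0,N}`. -/
theorem level_crossing_lower_passage_time_optimal
{Ω : Type*} [TopologicalSpace Ω] [PolishSpace Ω]
    [m0 : MeasurableSpace Ω] [BorelSpace Ω]
    (μ : Measure Ω) [IsProbabilityMeasure μ]
    (F : Filtration ℕ m0) (N : ℕ) (hN : 1 ≤ N)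
    (EE : NLExp μ F N)
(X : ℕ → Ω → ℝ)
    (hX_adapted : ∀ t, t ≤ N → StronglyMeasurable[F t] (X t))
    (hX_sqInt : ∀ t, t ≤ N → MemLp (X t) 2 μ)
(L : ℕ → Ω → ℝ)
    (hL_adapted : ∀ t, t < N → StronglyMeasurable[F t] (L t))
    (hL_sqInt : ∀ t, t < N →
      MemLp (fun ω => ∑ u ∈ Finset.Ico t N, runMax L t u ω) 2 μ)
    (hL_rep : ∀ t, t < N →
      X t =ᵐ[μ] EE.E t fun ω => (∑ u ∈ Finset.Ico t N, runMax L t u ω) + X N ω)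
    (τlow : Ω → ℕ)
    (hτlow_def : ∀ ω, τlow ω = sInf ({v | v < N ∧ 0 ≤ L v ω} ∪ {N})) :
    IsStoppingTime F (fun ω => (τlow ω : WithTop ℕ)) ∧ (∀ ω, τlow ω ≤ N) ∧
    ∀ τ : Ω → ℕ, IsStoppingTime F (fun ω => (τ ω : WithTop ℕ)) → (∀ ω, τ ω ≤ N) →
      EE.E 0 (fun ω => X (τ ω) ω) ≤ᵐ[μ] EE.E 0 fun ω => X (τlow ω) ω := by
  classical
  -- basic facts about τlow
  have hτN : ∀ ω, τlow ω ≤ N := by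
    intro ω
    rw [hτlow_def ω]
    exact Nat.sInf_le (Or.inr rfl)
  have hneg : ∀ ω v, v < τlow ω → L v ω < 0 := by
    intro ω v hv
    have hvN : v < N := lt_of_lt_of_le hv (hτN ω)
    rw [hτlow_def ω] at hv
    have hnm := Nat.notMem_of_lt_sInf hv
    simp only [Set.mem_union, Set.mem_setOf_eq, Set.mem_singleton_iff, not_or] at hnm
    by_contra h
    exact hnm.1 ⟨hvN, le_of_not_gt h⟩
  have hpos : ∀ ω, τlow ω < N → 0 ≤ L (τlow ω) ω := by
    intro ω hlt
    have hmem := Nat.sInf_mem (⟨N, Or.inr rfl⟩ :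
      ({v | v < N ∧ 0 ≤ L v ω} ∪ {N} : Set ℕ).Nonempty)
    rw [← hτlow_def ω] at hmem
    rcases hmem with h | h
    · exact h.2
    · exact absurd h (by simpa using hlt.ne)
  -- τlow is a stopping time
  have hst : IsStoppingTime F (fun ω => (τlow ω : WithTop ℕ)) := by
    intro n
    suffices MeasurableSet[F n] {ω | τlow ω ≤ n} by simpa using this
    by_cases hn : n < N
    · have hset : {ω | τlow ω ≤ n} = ⋃ v, ⋃ (_ : v ≤ n), {ω | 0 ≤ L v ω} := by
        ext ω
        simp only [Set.mem_setOf_eq, Set.mem_iUnion]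
        constructor
        · intro h
          exact ⟨τlow ω, h, hpos ω (lt_of_le_of_lt h hn)⟩
        · rintro ⟨v, hvn, hvL⟩
          rw [hτlow_def ω]
          exact le_trans (Nat.sInf_le (Or.inl ⟨lt_of_le_of_lt hvn hn, hvL⟩)) hvn
      rw [hset]
      refine MeasurableSet.iUnion fun v => MeasurableSet.iUnion fun hv => ?_
      have hvN : v < N := lt_of_le_of_lt hv hn
      have : MeasurableSet[F v] {ω | 0 ≤ L v ω} :=
        measurableSet_le measurable_const (hL_adapted v hvN).measurable
      exact F.mono hv _ this
    · have hset : {ω | τlow ω ≤ n} = Set.univ := by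
        ext ω
        simp only [Set.mem_setOf_eq, Set.mem_univ, iff_true]
        exact le_trans (hτN ω) (le_of_not_gt hn)
      rw [hset]
      exact MeasurableSet.univ
  refine ⟨hst, hτN, ?_⟩
  intro τ hτ hτ'N
  -- the representation family Ξ
  set Ξ : ℕ → Ω → ℝ :=
    fun s ω => (∑ u ∈ Finset.Ico s N, runMax L s u ω) + X N ω with hΞdef
  have hΞsm : ∀ s, s ≤ N → StronglyMeasurable[F N] (Ξ s) := fun s hs =>
    xi_sm hL_adapted ((hX_adapted N le_rfl).mono (F.mono le_rfl)) hs
  have hΞN : Ξ N = X N := by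
    funext ω
    simp [hΞdef, Finset.Ico_self]
  have hΞ2 : ∀ s, s ≤ N → MemLp (Ξ s) 2 μ := by
    intro s hs
    rcases lt_or_eq_of_le hs with h | h
    · exact (hL_sqInt s h).add (hX_sqInt N le_rfl)
    · rw [h, hΞN]
      exact hX_sqInt N le_rfl
  have hrep : ∀ t, t ≤ N → EE.E t (Ξ t) =ᵐ[μ] X t := by
    intro t ht
    rcases lt_or_eq_of_le ht with h | h
    · exact (hL_rep t h).symm
    · rw [h, hΞN]
      exact NLExp_id EE le_rfl (hX_adapted N le_rfl) (hX_sqInt N le_rfl)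
  -- the two optional-sampling identities
  have k1 := key_identity EE X Ξ hX_adapted hX_sqInt hΞsm hΞ2 hrep τ hτ hτ'N
  have k2 := key_identity EE X Ξ hX_adapted hX_sqInt hΞsm hΞ2 hrep τlow hst hτN
  -- the pointwise comparison
  have hle : (fun ω => Ξ (τ ω) ω) ≤ᵐ[μ] fun ω => Ξ (τlow ω) ω := by
    refine Eventually.of_forall fun ω => ?_
    have := sumRunMax_le L ω (hτN ω) (fun v hv => hneg ω v hv) (hpos ω) (hτ'N ω)
    simp only [hΞdef]
    linarith
  have hmono := EE.mono 0 (Nat.zero_le N) _ _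
    (assemble_sm hτ hτ'N hΞsm) (assemble_l2 hτ hτ'N hΞ2)
    (assemble_sm hst hτN hΞsm) (assemble_l2 hst hτN hΞ2) hle
  filter_upwards [k1, k2, hmono] with ω h1 h2 h3
  rw [h1, h2]
  exact h3
end
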